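/- arXiv:2308.12451 — 6 statements merged into one kernel-verified Lean document; each statement's English description precedes it below -/
import Mathlib

section
/- Let X, Z be finite nonempty sets and let A : X×Z → ℝ_{≥0} be a nonnegative function. Then for all positive integers ℓ ≤ ℓ' and k ≤ k', one has ‖A‖_{U(ℓ,k)} ≤ ‖A‖_{U(ℓ',k)} and ‖A‖_{U(ℓ,k)} ≤ ‖A‖_{U(ℓ,k')}. -/
open Finset

/-- Expectation of `f` with respect to the uniform distribution on a finite type. -/
noncomputable def eavg {α : Type*} [Fintype α] (f : α → ℝ) : ℝ :=
  (∑ a, f a) / (Fintype.card α : ℝ)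

/-- `A : X × Z → ℝ` is `(r,ε)`-spread: no rectangle of density at least `2^{-r}`
has average notably larger than the global average. -/
def Spread {X Z : Type*} [Fintype X] [Fintype Z]
    (A : X × Z → ℝ) (r ε : ℝ) : Prop :=
  ∀ (X' : Finset X) (Z' : Finset Z),
    (2 : ℝ) ^ (-r) * ((Fintype.card X : ℝ) * Fintype.card Z) ≤ (X'.card : ℝ) * Z'.card →
    (∑ x ∈ X', ∑ z ∈ Z', A (x, z)) / ((X'.card : ℝ) * Z'.card) ≤ (1 + ε) * eavg A

/-- `A : X × Z → ℝ` is `ε`-left lower-bounded: every row average is at least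
`(1-ε)` times the global average. -/
def LeftLB {X Z : Type*} [Fintype X] [Fintype Z]
    (A : X × Z → ℝ) (ε : ℝ) : Prop :=
  ∀ x : X, (1 - ε) * eavg A ≤ (∑ z : Z, A (x, z)) / (Fintype.card Z : ℝ)

/-- The grid quantity `U_{ℓ,k}(f) = E ∏_{i,j} f(x_i, z_j)`. -/
noncomputable def gridU {X Z : Type*} [Fintype X] [Fintype Z]
    (f : X × Z → ℝ) (l k : ℕ) : ℝ :=
  (∑ x : Fin l → X, ∑ z : Fin k → Z, ∏ i, ∏ j, f (x i, z j)) /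
    ((Fintype.card X : ℝ) ^ l * (Fintype.card Z : ℝ) ^ k)

/-- The grid norm `‖f‖_{U(ℓ,k)} = |U_{ℓ,k}(f)|^{1/(ℓk)}`. -/
noncomputable def gridNorm {X Z : Type*} [Fintype X] [Fintype Z]
    (f : X × Z → ℝ) (l k : ℕ) : ℝ :=
  |gridU f l k| ^ ((1 : ℝ) / ((l : ℝ) * k))

lemma eavg_nonneg' {α : Type*} [Fintype α] {f : α → ℝ} (hf : ∀ a, 0 ≤ f a) : 0 ≤ eavg f :=
  div_nonneg (Finset.sum_nonneg fun a _ => hf a) (Nat.cast_nonneg _)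

/-- Power mean inequality for uniform averages. -/
lemma powMean_mono' {α : Type*} [Fintype α] [Nonempty α] (f : α → ℝ) (hf : ∀ a, 0 ≤ f a)
    {m n : ℕ} (hm : 0 < m) (hmn : m ≤ n) :
    (eavg fun a => f a ^ m) ^ ((1 : ℝ) / m) ≤ (eavg fun a => f a ^ n) ^ ((1 : ℝ) / n) := by
  have hn : 0 < n := hm.trans_le hmn
  set c : ℝ := (Fintype.card α : ℝ) with hcdef
  have hc : 0 < c := by positivity
  have havg : ∀ g : α → ℝ, ∑ a, (1 / c) * g a = eavg g := by
    intro g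
    rw [← Finset.mul_sum, eavg, one_div, inv_mul_eq_div]
  have hp : (1 : ℝ) ≤ (n : ℝ) / m := by
    rw [le_div_iff₀ (by exact_mod_cast hm)]
    simpa using (Nat.cast_le (α := ℝ)).2 hmn
  have hw : ∑ _a : α, (1 / c) = 1 := by
    rw [Finset.sum_const, Finset.card_univ, nsmul_eq_mul, ← hcdef]
    field_simp
  have key := Real.rpow_arith_mean_le_arith_mean_rpow Finset.univ (fun _ : α => 1 / c)
    (fun a => f a ^ m) (fun i _ => by positivity) hw
    (fun i _ => pow_nonneg (hf i) m) hp
  simp only [havg] at key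
  have hpow : (fun a => ((f a ^ m : ℝ)) ^ ((n : ℝ) / m)) = fun a => f a ^ n := by
    funext a
    rw [← Real.rpow_natCast (f a) m, ← Real.rpow_mul (hf a), ← Real.rpow_natCast (f a) n]
    congr 1
    field_simp
  rw [hpow] at key
  have h1 : 0 ≤ eavg fun a => f a ^ m := eavg_nonneg' fun a => pow_nonneg (hf a) m
  have h2 := Real.rpow_le_rpow (by positivity) key (by positivity : (0:ℝ) ≤ 1 / n)
  rwa [← Real.rpow_mul h1, show ((n:ℝ)/m) * (1/n) = 1/m by field_simp] at h2

/-- `gridU` as an average over `x`-tuples of `k`-th powers of row averages. -/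
lemma gridU_eq_xk' {X Z : Type*} [Fintype X] [Fintype Z]
    (A : X × Z → ℝ) (l k : ℕ) :
    gridU A l k = eavg fun x : Fin l → X => (eavg fun z : Z => ∏ i, A (x i, z)) ^ k := by
  have key : ∀ x : Fin l → X, ∑ z : Fin k → Z, ∏ i, ∏ j, A (x i, z j)
      = (∑ z : Z, ∏ i, A (x i, z)) ^ k := by
    intro x
    rw [Fintype.sum_pow (fun z : Z => ∏ i, A (x i, z)) k]
    exact Finset.sum_congr rfl fun z _ => Finset.prod_comm
  unfold gridU eavg
  rw [Fintype.card_fun, Fintype.card_fin,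
    show (∑ x : Fin l → X, ∑ z : Fin k → Z, ∏ i, ∏ j, A (x i, z j))
      = ∑ x : Fin l → X, (∑ z : Z, ∏ i, A (x i, z)) ^ k from
      Finset.sum_congr rfl fun x _ => key x]
  push_cast
  simp only [div_pow]
  rw [← Finset.sum_div, div_div, mul_comm ((Fintype.card Z : ℝ) ^ k)]

/-- `gridU` as an average over `z`-tuples of `l`-th powers of column averages. -/
lemma gridU_eq_zl' {X Z : Type*} [Fintype X] [Fintype Z]
    (A : X × Z → ℝ) (l k : ℕ) :
    gridU A l k = eavg fun z : Fin k → Z => (eavg fun x : X => ∏ j, A (x, z j)) ^ l := by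
  have key : ∀ z : Fin k → Z, ∑ x : Fin l → X, ∏ i, ∏ j, A (x i, z j)
      = (∑ x : X, ∏ j, A (x, z j)) ^ l := fun z =>
    (Fintype.sum_pow (fun x : X => ∏ j, A (x, z j)) l).symm
  unfold gridU eavg
  rw [Fintype.card_fun, Fintype.card_fin, Finset.sum_comm,
    show (∑ z : Fin k → Z, ∑ x : Fin l → X, ∏ i, ∏ j, A (x i, z j))
      = ∑ z : Fin k → Z, (∑ x : X, ∏ j, A (x, z j)) ^ l from
      Finset.sum_congr rfl fun z _ => key z]
  push_cast
  simp only [div_pow]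
  rw [← Finset.sum_div, div_div]

/-- monotonicity of grid norms for nonnegative functions. -/
theorem gridNorm_monotone :
    ∀ (X Z : Type) [Fintype X] [Fintype Z], Nonempty X → Nonempty Z →
      ∀ (A : X × Z → ℝ), (∀ p, 0 ≤ A p) →
        ∀ l k l' k' : ℕ, 0 < l → 0 < k → l ≤ l' → k ≤ k' →
          gridNorm A l k ≤ gridNorm A l' k ∧ gridNorm A l k ≤ gridNorm A l k' := by
  intro X Z _ _ hX hZ A hA l k l' k' hl hk hll' hkk'
  have hl' : 0 < l' := hl.trans_le hll'
  have hk' : 0 < k' := hk.trans_le hkk'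
  -- nonnegative auxiliary functions
  have hg : ∀ (m : ℕ) (x : Fin m → X), 0 ≤ eavg fun z : Z => ∏ i, A (x i, z) :=
    fun m x => eavg_nonneg' fun z => Finset.prod_nonneg fun i _ => hA _
  have hh : ∀ (m : ℕ) (z : Fin m → Z), 0 ≤ eavg fun x : X => ∏ j, A (x, z j) :=
    fun m z => eavg_nonneg' fun x => Finset.prod_nonneg fun j _ => hA _
  have habs : ∀ (m n : ℕ), |gridU A m n| = gridU A m n := fun m n => by
    rw [abs_of_nonneg]
    rw [gridU_eq_xk']
    exact eavg_nonneg' fun x => pow_nonneg (hg m x) n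
  constructor
  · -- monotone in l : use z-representation
    have hmain := powMean_mono' (α := Fin k → Z)
      (fun z => eavg fun x : X => ∏ j, A (x, z j)) (hh k) hl hll'
    rw [← gridU_eq_zl', ← gridU_eq_zl'] at hmain
    have hres := Real.rpow_le_rpow (by rw [← habs]; positivity) hmain
      (by positivity : (0:ℝ) ≤ 1 / k)
    unfold gridNorm
    rw [habs, habs]
    rw [← Real.rpow_mul (by rw [← habs]; positivity),
        ← Real.rpow_mul (by rw [← habs]; positivity)] at hres
    have e1 : (1:ℝ)/l * (1/k) = 1 / ((l:ℝ) * k) := by field_simp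
    have e2 : (1:ℝ)/l' * (1/k) = 1 / ((l':ℝ) * k) := by field_simp
    rwa [e1, e2] at hres
  · -- monotone in k : use x-representation
    have hmain := powMean_mono' (α := Fin l → X)
      (fun x => eavg fun z : Z => ∏ i, A (x i, z)) (hg l) hk hkk'
    rw [← gridU_eq_xk', ← gridU_eq_xk'] at hmain
    have hres := Real.rpow_le_rpow (by rw [← habs]; positivity) hmain
      (by positivity : (0:ℝ) ≤ 1 / l)
    unfold gridNorm
    rw [habs, habs]
    rw [← Real.rpow_mul (by rw [← habs]; positivity),
        ← Real.rpow_mul (by rw [← habs]; positivity)] at hres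
    have e1 : (1:ℝ)/k * (1/l) = 1 / ((l:ℝ) * k) := by field_simp
    have e2 : (1:ℝ)/k' * (1/l) = 1 / ((l:ℝ) * k') := by field_simp
    rwa [e1, e2] at hres
end

section
/- Let X, Y, Z be finite nonempty sets, let f : X×Z → ℝ and g : Y×Z → ℝ, and let k be an even positive integer. Then E_{x∈X, y∈Y}[(E_{z∈Z} f(x,z)g(y,z))^k] ≤ U_{2,k}(f)^{1/2} · U_{2,k}(g)^{1/2}. -/
open Finset

/-- decoupling inequality for `U_{2,k}`. -/
theorem decoupling :
    ∀ (X Y Z : Type) [Fintype X] [Fintype Y] [Fintype Z],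
      Nonempty X → Nonempty Y → Nonempty Z →
      ∀ (f : X × Z → ℝ) (g : Y × Z → ℝ) (k : ℕ), 0 < k → Even k →
        (∑ x : X, ∑ y : Y,
            ((∑ z : Z, f (x, z) * g (y, z)) / (Fintype.card Z : ℝ)) ^ k) /
          ((Fintype.card X : ℝ) * Fintype.card Y) ≤
        Real.sqrt (gridU f 2 k) * Real.sqrt (gridU g 2 k) := by
  intro X Y Z _ _ _ hX hY hZ f g k hk hke
  unfold gridU
  haveI := hX; haveI := hY; haveI := hZ
  set nX := (Fintype.card X : ℝ) with hnX
  set nY := (Fintype.card Y : ℝ) with hnY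
  set nZ := (Fintype.card Z : ℝ) with hnZ
  have hXpos : (0:ℝ) < nX := by rw [hnX]; exact_mod_cast (Fintype.card_pos (α := X))
  have hYpos : (0:ℝ) < nY := by rw [hnY]; exact_mod_cast (Fintype.card_pos (α := Y))
  have hZpos : (0:ℝ) < nZ := by rw [hnZ]; exact_mod_cast (Fintype.card_pos (α := Z))
  set F : (Fin k → Z) → ℝ := fun p => ∑ x, ∏ j, f (x, p j) with hF
  set G : (Fin k → Z) → ℝ := fun p => ∑ y, ∏ j, g (y, p j) with hG
  set D : ℝ := nX * nY * nZ ^ k with hD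
  have hDpos : (0:ℝ) < D := by positivity
  -- LHS identity
  have hA : (∑ x : X, ∑ y : Y, ((∑ z : Z, f (x, z) * g (y, z)) / nZ) ^ k) / (nX * nY)
      = (∑ p : Fin k → Z, F p * G p) / D := by
    have h1 : ∀ (x : X) (y : Y), ((∑ z : Z, f (x, z) * g (y, z)) / nZ) ^ k
        = (∑ p : Fin k → Z, (∏ j, f (x, p j)) * ∏ j, g (y, p j)) / nZ ^ k := by
      intro x y
      rw [div_pow, Fintype.sum_pow]
      simp_rw [Finset.prod_mul_distrib]
    have hnum : ∑ p : Fin k → Z, F p * G p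
        = ∑ x : X, ∑ y : Y, ∑ p : Fin k → Z,
            (∏ j, f (x, p j)) * ∏ j, g (y, p j) := by
      simp_rw [hF, hG, Finset.sum_mul_sum]
      rw [Finset.sum_comm]
      exact Finset.sum_congr rfl fun x _ => by rw [Finset.sum_comm]
    simp_rw [h1, ← Finset.sum_div]
    rw [← hnum, div_div, hD]
    congr 1
    ring
  -- gridU identities
  have hUf : (∑ x : Fin 2 → X, ∑ z : Fin k → Z, ∏ i, ∏ j, f (x i, z j)) /
      (nX ^ 2 * nZ ^ k) = (∑ p : Fin k → Z, F p ^ 2) / (nX ^ 2 * nZ ^ k) := by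
    congr 1
    rw [Finset.sum_comm]
    congr 1; funext p
    rw [hF, Fintype.sum_pow]
  have hUg : (∑ y : Fin 2 → Y, ∑ z : Fin k → Z, ∏ i, ∏ j, g (y i, z j)) /
      (nY ^ 2 * nZ ^ k) = (∑ p : Fin k → Z, G p ^ 2) / (nY ^ 2 * nZ ^ k) := by
    congr 1
    rw [Finset.sum_comm]
    congr 1; funext p
    rw [hG, Fintype.sum_pow]
  rw [hA, hUf, hUg]
  have hF2 : (0:ℝ) ≤ ∑ p : Fin k → Z, F p ^ 2 := by positivity
  have hG2 : (0:ℝ) ≤ ∑ p : Fin k → Z, G p ^ 2 := by positivity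
  have hfnn : (0:ℝ) ≤ (∑ p : Fin k → Z, F p ^ 2) / (nX ^ 2 * nZ ^ k) := by positivity
  rw [← Real.sqrt_mul hfnn]
  have hcomb : (∑ p : Fin k → Z, F p ^ 2) / (nX ^ 2 * nZ ^ k) *
      ((∑ p : Fin k → Z, G p ^ 2) / (nY ^ 2 * nZ ^ k))
      = ((∑ p : Fin k → Z, F p ^ 2) * ∑ p : Fin k → Z, G p ^ 2) / D ^ 2 := by
    rw [hD, div_mul_div_comm]; congr 1; ring
  rw [hcomb, Real.sqrt_div (mul_nonneg hF2 hG2) _, Real.sqrt_sq hDpos.le]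
  gcongr
  calc ∑ p : Fin k → Z, F p * G p ≤ |∑ p : Fin k → Z, F p * G p| := le_abs_self _
    _ = Real.sqrt ((∑ p : Fin k → Z, F p * G p) ^ 2) := (Real.sqrt_sq_eq_abs _).symm
    _ ≤ Real.sqrt ((∑ p : Fin k → Z, F p ^ 2) * ∑ p : Fin k → Z, G p ^ 2) :=
      Real.sqrt_le_sqrt (Finset.sum_mul_sq_le_sq_mul_sq _ _ _)
end

section
/- Let X, Y be finite nonempty sets, let Δ > 0, δ > 0, ε > 0. Let D : X×Y → ℝ_{≥0} satisfy ‖D‖_∞ ≤ Δ, and let F : X×Y → ℝ be a convex combination of rectangle indicator functions with ‖F‖₁ ≥ δ. If ⟨F/‖F‖₁, D⟩ ≥ 1 + ε, then there is a rectangle R = X'×Y' ⊆ X×Y with E_{(x,y)∈R}[D(x,y)] ≥ 1 + ε/2 and |R|/(|X||Y|) ≥ εδ/(2Δ). -/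
open Finset

lemma ind_mul_sum {X Y : Type} [Fintype X] [Fintype Y] [DecidableEq X] [DecidableEq Y]
    (A : Finset X) (B : Finset Y) (f : X × Y → ℝ) :
    ∑ p : X × Y, (if p.1 ∈ A ∧ p.2 ∈ B then (1:ℝ) else 0) * f p = ∑ x ∈ A, ∑ y ∈ B, f (x, y) := by
  rw [Fintype.sum_prod_type]
  have h : ∀ x : X, ∑ y : Y, (if x ∈ A ∧ y ∈ B then (1:ℝ) else 0) * f (x, y)
      = if x ∈ A then ∑ y ∈ B, f (x, y) else 0 := by
    intro x
    by_cases hx : x ∈ A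
    · simp [hx, ite_mul, Finset.sum_ite_mem]
    · simp [hx]
  simp_rw [h]
  simp [Finset.sum_ite_mem]


/-- pruning: if a nonnegative bounded function correlates with a
convex combination of rectangles, it correlates with a single large rectangle. -/
theorem pruning :
    ∀ (X Y : Type) [Fintype X] [Fintype Y] [DecidableEq X] [DecidableEq Y],
      Nonempty X → Nonempty Y →
      ∀ (Δ δ ε : ℝ), 0 < Δ → 0 < δ → 0 < ε →
      ∀ D : X × Y → ℝ, (∀ p, 0 ≤ D p) → (∀ p, |D p| ≤ Δ) →
      ∀ (n : ℕ) (c : Fin n → ℝ) (RX : Fin n → Finset X) (RY : Fin n → Finset Y),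
        (∀ i, 0 ≤ c i) → (∑ i, c i) = 1 →
        ∀ F : X × Y → ℝ,
          (∀ p, F p = ∑ i, c i * (if p.1 ∈ RX i ∧ p.2 ∈ RY i then 1 else 0)) →
          δ ≤ eavg (fun p => |F p|) →
          1 + ε ≤ eavg (fun p => F p / eavg (fun q => |F q|) * D p) →
          ∃ (X' : Finset X) (Y' : Finset Y),
            1 + ε / 2 ≤ (∑ x ∈ X', ∑ y ∈ Y', D (x, y)) / ((X'.card : ℝ) * Y'.card) ∧
            ε * δ / (2 * Δ) ≤
              ((X'.card : ℝ) * Y'.card) / ((Fintype.card X : ℝ) * Fintype.card Y) := by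
  intro X Y _ _ _ _ hX hY Δ δ ε hΔ hδ hε D hD0 hDΔ n c RX RY hc0 hc1 F hF hδF hcor
  set N : ℝ := (Fintype.card X : ℝ) * Fintype.card Y with hN
  have hNpos : 0 < N := by
    have := Fintype.card_pos_iff.mpr hX
    have := Fintype.card_pos_iff.mpr hY
    positivity
  set β : Fin n → ℝ := fun i => ((RX i).card : ℝ) * ((RY i).card : ℝ) with hβ
  set σ : Fin n → ℝ := fun i => ∑ x ∈ RX i, ∑ y ∈ RY i, D (x, y) with hσ
  have hβ0 : ∀ i, 0 ≤ β i := fun i => by positivity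
  have hσ0 : ∀ i, 0 ≤ σ i := fun i =>
    Finset.sum_nonneg fun x _ => Finset.sum_nonneg fun y _ => hD0 _
  have hσΔ : ∀ i, σ i ≤ Δ * β i := by
    intro i
    have : σ i ≤ ∑ x ∈ RX i, ∑ y ∈ RY i, Δ := by
      apply Finset.sum_le_sum; intro x _
      apply Finset.sum_le_sum; intro y _
      exact (le_abs_self _).trans (hDΔ _)
    simpa [mul_comm, mul_assoc, mul_left_comm] using this
  -- F is nonnegative
  have hF0 : ∀ p, 0 ≤ F p := by
    intro p; rw [hF p]
    exact Finset.sum_nonneg fun i _ => mul_nonneg (hc0 i) (by positivity)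
  have habs : (fun p : X × Y => |F p|) = F := by
    funext p; exact abs_of_nonneg (hF0 p)
  -- sum of F
  have hsumF : ∑ p : X × Y, F p = ∑ i, c i * β i := by
    calc ∑ p : X × Y, F p
        = ∑ p : X × Y, ∑ i, c i * (if p.1 ∈ RX i ∧ p.2 ∈ RY i then (1:ℝ) else 0) := by
          exact Finset.sum_congr rfl fun p _ => hF p
      _ = ∑ i, c i * ∑ p : X × Y, (if p.1 ∈ RX i ∧ p.2 ∈ RY i then (1:ℝ) else 0) * 1 := by
          rw [Finset.sum_comm]
          exact Finset.sum_congr rfl fun i _ => by rw [← Finset.mul_sum]; simp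
      _ = ∑ i, c i * β i := by
          refine Finset.sum_congr rfl fun i _ => ?_
          rw [ind_mul_sum (RX i) (RY i) (fun _ => 1)]
          simp [hβ, mul_comm]
  have hsumFD : ∑ p : X × Y, F p * D p = ∑ i, c i * σ i := by
    calc ∑ p : X × Y, F p * D p
        = ∑ p : X × Y, ∑ i, c i * ((if p.1 ∈ RX i ∧ p.2 ∈ RY i then (1:ℝ) else 0) * D p) := by
          refine Finset.sum_congr rfl fun p _ => ?_
          rw [hF p, Finset.sum_mul]
          exact Finset.sum_congr rfl fun i _ => by ring
      _ = ∑ i, c i * ∑ p : X × Y, (if p.1 ∈ RX i ∧ p.2 ∈ RY i then (1:ℝ) else 0) * D p := by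
          rw [Finset.sum_comm]
          exact Finset.sum_congr rfl fun i _ => by rw [← Finset.mul_sum]
      _ = ∑ i, c i * σ i := by
          refine Finset.sum_congr rfl fun i _ => ?_
          rw [ind_mul_sum (RX i) (RY i) D]
  set μ : ℝ := eavg (fun p : X × Y => |F p|) with hμ
  have hμval : μ = (∑ i, c i * β i) / N := by
    rw [hμ, eavg, habs, hsumF, Fintype.card_prod]; push_cast; rfl
  have hμpos : 0 < μ := lt_of_lt_of_le hδ hδF
  -- the correlation hypothesis
  have hcor' : (1 + ε) * (μ * N) ≤ ∑ i, c i * σ i := by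
    have he : eavg (fun p : X × Y => F p / μ * D p) = (∑ i, c i * σ i) / (μ * N) := by
      rw [eavg, Fintype.card_prod]
      have : ∑ p : X × Y, F p / μ * D p = (∑ p : X × Y, F p * D p) / μ := by
        rw [Finset.sum_div]
        exact Finset.sum_congr rfl fun p _ => by ring
      rw [this, hsumFD]
      push_cast
      rw [div_div]
    rw [he] at hcor
    exact (le_div_iff₀ (by positivity)).mp hcor
  -- good set
  set G : Finset (Fin n) := Finset.univ.filter (fun i => (1 + ε / 2) * β i ≤ σ i) with hG
  have hbad : ∑ i ∈ Finset.univ.filter (fun i => ¬ ((1 + ε / 2) * β i ≤ σ i)), c i * σ i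
      ≤ (1 + ε / 2) * ∑ i, c i * β i := by
    calc ∑ i ∈ Finset.univ.filter (fun i => ¬ ((1 + ε / 2) * β i ≤ σ i)), c i * σ i
        ≤ ∑ i ∈ Finset.univ.filter (fun i => ¬ ((1 + ε / 2) * β i ≤ σ i)), c i * ((1 + ε / 2) * β i) := by
          apply Finset.sum_le_sum
          intro i hi
          rw [Finset.mem_filter] at hi
          exact mul_le_mul_of_nonneg_left (le_of_lt (lt_of_not_ge hi.2)) (hc0 i)
      _ ≤ ∑ i, c i * ((1 + ε / 2) * β i) := by
          apply Finset.sum_le_sum_of_subset_of_nonneg (Finset.filter_subset _ _)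
          intro i _ _
          have : 0 ≤ 1 + ε / 2 := by linarith
          exact mul_nonneg (hc0 i) (mul_nonneg this (hβ0 i))
      _ = (1 + ε / 2) * ∑ i, c i * β i := by
          rw [Finset.mul_sum]; exact Finset.sum_congr rfl fun i _ => by ring
  have hgood : ε * δ * N / 2 ≤ ∑ i ∈ G, c i * σ i := by
    have hsplit : ∑ i ∈ G, c i * σ i
        + ∑ i ∈ Finset.univ.filter (fun i => ¬ ((1 + ε / 2) * β i ≤ σ i)), c i * σ i
        = ∑ i, c i * σ i := Finset.sum_filter_add_sum_filter_not _ _ _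
    have hμN : ∑ i, c i * β i = μ * N := by
      rw [hμval]; field_simp
    have h1 : (1 + ε) * (μ * N) ≤ ∑ i ∈ G, c i * σ i + (1 + ε / 2) * (μ * N) := by
      calc (1 + ε) * (μ * N) ≤ ∑ i, c i * σ i := hcor'
        _ = ∑ i ∈ G, c i * σ i
            + ∑ i ∈ Finset.univ.filter (fun i => ¬ ((1 + ε / 2) * β i ≤ σ i)), c i * σ i :=
            hsplit.symm
        _ ≤ ∑ i ∈ G, c i * σ i + (1 + ε / 2) * ∑ i, c i * β i := by linarith [hbad]
        _ = ∑ i ∈ G, c i * σ i + (1 + ε / 2) * (μ * N) := by rw [hμN]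
    have h2 : ε / 2 * (μ * N) ≤ ∑ i ∈ G, c i * σ i := by nlinarith
    have h3 : δ * N ≤ μ * N := by
      apply mul_le_mul_of_nonneg_right hδF (le_of_lt hNpos)
    nlinarith
  set T : ℝ := ε * δ * N / (2 * Δ) with hT
  have hTpos : 0 < T := by positivity
  have hGβ : T ≤ ∑ i ∈ G, c i * β i := by
    have h1 : ∑ i ∈ G, c i * σ i ≤ Δ * ∑ i ∈ G, c i * β i := by
      rw [Finset.mul_sum]
      apply Finset.sum_le_sum
      intro i _
      calc c i * σ i ≤ c i * (Δ * β i) := mul_le_mul_of_nonneg_left (hσΔ i) (hc0 i)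
        _ = Δ * (c i * β i) := by ring
    rw [hT]
    rw [div_le_iff₀ (by positivity)]
    nlinarith [hgood]
  -- find the good rectangle
  have hexists : ∃ i ∈ G, T ≤ β i := by
    by_contra hcon
    push_neg at hcon
    -- some j ∈ G with c j * β j > 0
    have hpos : 0 < ∑ i ∈ G, c i * β i := lt_of_lt_of_le hTpos hGβ
    obtain ⟨j, hjG, hj⟩ : ∃ j ∈ G, 0 < c j * β j := by
      by_contra hall
      push_neg at hall
      have : ∑ i ∈ G, c i * β i ≤ 0 :=
        Finset.sum_nonpos fun i hi => hall i hi
      linarith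
    have hcj : 0 < c j := by
      rcases lt_or_ge 0 (c j) with h | h
      · exact h
      · exfalso; nlinarith [hβ0 j]
    have hlt : ∑ i ∈ G, c i * β i < ∑ i ∈ G, c i * T := by
      apply Finset.sum_lt_sum
      · intro i hi
        exact mul_le_mul_of_nonneg_left (le_of_lt (hcon i hi)) (hc0 i)
      · exact ⟨j, hjG, by
          have := hcon j hjG
          exact mul_lt_mul_of_pos_left this hcj⟩
    have hsum : ∑ i ∈ G, c i * T ≤ T := by
      calc ∑ i ∈ G, c i * T = (∑ i ∈ G, c i) * T := by rw [Finset.sum_mul]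
        _ ≤ 1 * T := by
            apply mul_le_mul_of_nonneg_right _ (le_of_lt hTpos)
            rw [← hc1]
            exact Finset.sum_le_sum_of_subset_of_nonneg (Finset.subset_univ G)
              (fun i _ _ => hc0 i)
        _ = T := one_mul T
    linarith [hGβ]
  obtain ⟨i, hiG, hiT⟩ := hexists
  have hβipos : 0 < β i := lt_of_lt_of_le hTpos hiT
  rw [hG, Finset.mem_filter] at hiG
  refine ⟨RX i, RY i, ?_, ?_⟩
  · rw [le_div_iff₀ hβipos]
    calc (1 + ε / 2) * (((RX i).card : ℝ) * (RY i).card) = (1 + ε / 2) * β i := rfl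
      _ ≤ σ i := hiG.2
  · rw [le_div_iff₀ hNpos]
    have : ε * δ / (2 * Δ) * N = T := by rw [hT]; ring
    rw [this]
    exact hiT
end

section
/- Let X, Y be finite nonempty sets, let δ, ε ∈ (0,1), let ℓ, k be positive integers, and let A : X×Y → [0,1] with ‖A‖₁ ≥ δ. (a) If ‖A‖_{U(ℓ,k)} ≥ (1+ε)‖A‖₁, then there is a rectangle R = X'×Y' ⊆ X×Y with E_{(x,y)∈R}[A(x,y)] ≥ (1+ε/2)‖A‖₁ and |R|/(|X||Y|) ≥ (1/2)·ε·δ^{ℓk+1}. (b) Consequently, if A is (r,ε)-spread for some r ≥ (ℓk+1)·log₂(1/δ) + log₂(1/ε), then ‖A‖_{U(ℓ,k)} ≤ (1+2ε)‖A‖₁. -/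
open Finset

section helpers

variable {T S : Type*} [Fintype T] [Fintype S]

lemma eavg_nonneg {f : T → ℝ} (hf : ∀ t, 0 ≤ f t) : 0 ≤ eavg f :=
  div_nonneg (Finset.sum_nonneg fun t _ => hf t) (Nat.cast_nonneg _)

lemma eavg_le_one [Nonempty T] {f : T → ℝ} (hf : ∀ t, f t ≤ 1) : eavg f ≤ 1 := by
  have hc : 0 < (Fintype.card T : ℝ) := by
    exact_mod_cast Fintype.card_pos
  rw [eavg, div_le_one hc]
  calc ∑ t, f t ≤ ∑ _t : T, (1:ℝ) := Finset.sum_le_sum fun t _ => hf t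
    _ = (Fintype.card T : ℝ) := by simp

lemma eavg_one [Nonempty T] : eavg (fun _ : T => (1:ℝ)) = 1 := by
  have hc : (Fintype.card T : ℝ) ≠ 0 := by
    exact_mod_cast Fintype.card_pos.ne'
  simp [eavg, hc]

lemma exists_eavg_le [Nonempty T] (f : T → ℝ) : ∃ t, eavg f ≤ f t := by
  have hc : 0 < (Fintype.card T : ℝ) := by exact_mod_cast Fintype.card_pos
  by_contra h
  push_neg at h
  have : ∑ t, f t < ∑ _t : T, eavg f := by
    apply Finset.sum_lt_sum_of_nonempty univ_nonempty fun t _ => h t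
  rw [Finset.sum_const, Finset.card_univ, nsmul_eq_mul] at this
  rw [eavg] at this
  rw [mul_div_cancel₀ _ hc.ne'] at this
  exact lt_irrefl _ this

lemma eavg_equiv (e : S ≃ T) (f : T → ℝ) : eavg (fun s => f (e s)) = eavg f := by
  rw [eavg, eavg, e.sum_comp f, Fintype.card_congr e]

lemma eavg_snd [Nonempty S] (g : T → ℝ) : eavg (fun z : S × T => g z.2) = eavg g := by
  have hc : (Fintype.card S : ℝ) ≠ 0 := by exact_mod_cast Fintype.card_pos.ne'
  rw [eavg, eavg, Fintype.sum_prod_type, Fintype.card_prod]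
  simp only [Finset.sum_const, Finset.card_univ, nsmul_eq_mul, Nat.cast_mul]
  rw [mul_comm ((Fintype.card S : ℝ))]
  rw [← div_div, mul_div_assoc, div_self hc, mul_one]

lemma eavg_prod_mul (f : S → ℝ) (g : T → ℝ) :
    eavg (fun z : S × T => f z.1 * g z.2) = eavg f * eavg g := by
  rw [eavg, eavg, eavg, Fintype.sum_prod_type, Fintype.card_prod, Nat.cast_mul]
  rw [← Finset.sum_mul_sum]
  rw [div_mul_div_comm]

lemma eavg_sub_mul (f g : T → ℝ) (c : ℝ) :
    eavg (fun t => f t - c * g t) = eavg f - c * eavg g := by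
  rw [eavg, eavg, eavg, Finset.sum_sub_distrib, ← Finset.mul_sum]
  ring

lemma sum_prod_fn (n : ℕ) (g : T → ℝ) :
    ∑ f : Fin n → T, ∏ i, g (f i) = (∑ x, g x) ^ n := by
  classical
  rw [Finset.sum_pow', Fintype.piFinset_univ]

lemma sum_fn_succ (n : ℕ) (g : (Fin (n + 1) → T) → ℝ) :
    ∑ f : Fin (n + 1) → T, g f = ∑ x : T, ∑ f' : Fin n → T, g (Fin.cons x f') := by
  have := ((Fin.consEquiv (fun _ => T)).sum_comp g).symm
  rw [this, Fintype.sum_prod_type]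
  rfl

end helpers

section holder

variable {T : Type*} [Fintype T]

lemma holder_sum (F G : T → ℝ) (hF : ∀ t, 0 ≤ F t) (hG : ∀ t, 0 ≤ G t) (n : ℕ) :
    ∑ t, F t ^ n * G t ≤
      (∑ t, F t ^ (n + 1)) ^ ((n : ℝ) / (n + 1)) * (∑ t, G t ^ (n + 1)) ^ ((1 : ℝ) / (n + 1)) := by
  rcases Nat.eq_zero_or_pos n with hn | hn
  · subst hn
    simp [Real.rpow_natCast]
  · have hn' : (0:ℝ) < n := by exact_mod_cast hn
    have hpq : Real.HolderConjugate (((n:ℝ) + 1) / n) ((n:ℝ) + 1) := by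
      rw [Real.holderConjugate_iff]
      constructor
      · rw [lt_div_iff₀ hn']; linarith
      · rw [inv_div, inv_eq_one_div]
        field_simp
    have h := Real.inner_le_Lp_mul_Lq_of_nonneg (univ : Finset T) hpq
      (f := fun t => F t ^ n) (g := G)
      (fun t _ => pow_nonneg (hF t) n) (fun t _ => hG t)
    have e1 : ∀ t : T, (F t ^ n) ^ (((n:ℝ) + 1) / n) = F t ^ (n + 1) := by
      intro t
      rw [← Real.rpow_natCast (F t) n, ← Real.rpow_mul (hF t)]
      rw [mul_div_cancel₀ _ (ne_of_gt hn')]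
      · rw [← Real.rpow_natCast (F t) (n+1)]
        norm_num
    have e2 : ∀ t : T, G t ^ ((n:ℝ) + 1) = G t ^ (n + 1) := by
      intro t
      rw [← Real.rpow_natCast (G t) (n+1)]
      norm_num
    simp only [e1, e2] at h
    have e3 : 1 / (((n:ℝ) + 1) / n) = (n : ℝ) / (n + 1) := by
      rw [one_div_div]
    rw [e3] at h
    convert h using 4 <;> push_cast <;> ring

lemma holder_eavg [Nonempty T] (F G : T → ℝ) (hF : ∀ t, 0 ≤ F t) (hG : ∀ t, 0 ≤ G t) (n : ℕ) :
    eavg (fun t => F t ^ n * G t) ≤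
      eavg (fun t => F t ^ (n + 1)) ^ ((n : ℝ) / (n + 1)) *
        eavg (fun t => G t ^ (n + 1)) ^ ((1 : ℝ) / (n + 1)) := by
  have hc : (0:ℝ) < (Fintype.card T : ℝ) := by exact_mod_cast Fintype.card_pos
  have hFs : (0:ℝ) ≤ ∑ t, F t ^ (n+1) := Finset.sum_nonneg fun t _ => pow_nonneg (hF t) _
  have hGs : (0:ℝ) ≤ ∑ t, G t ^ (n+1) := Finset.sum_nonneg fun t _ => pow_nonneg (hG t) _
  have key := holder_sum F G hF hG n
  rw [eavg, eavg, eavg]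
  rw [Real.div_rpow hFs hc.le, Real.div_rpow hGs hc.le]
  rw [div_mul_div_comm]
  have hcard : (Fintype.card T : ℝ) ^ ((n:ℝ)/(n+1)) * (Fintype.card T : ℝ) ^ ((1:ℝ)/(n+1))
      = (Fintype.card T : ℝ) := by
    rw [← Real.rpow_add hc]
    have : (n:ℝ)/(n+1) + 1/(n+1) = 1 := by
      field_simp
    rw [this, Real.rpow_one]
  rw [hcard]
  gcongr

end holder

section gridids

variable {X Y : Type*} [Fintype X] [Fintype Y]

lemma card_fn_real (T : Type*) [Fintype T] (n : ℕ) :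
    (Fintype.card (Fin n → T) : ℝ) = (Fintype.card T : ℝ) ^ n := by
  rw [Fintype.card_fun, Fintype.card_fin]
  push_cast
  ring

lemma gridU_eq_avg_q (A : X × Y → ℝ) (l k : ℕ) :
    gridU A l k =
      eavg (fun xv : Fin l → X => (eavg fun y => ∏ i, A (xv i, y)) ^ k) := by
  have key : ∀ xv : Fin l → X, ∑ yv : Fin k → Y, ∏ i, ∏ j, A (xv i, yv j)
      = (∑ y, ∏ i, A (xv i, y)) ^ k := by
    intro xv
    rw [← sum_prod_fn k (fun y => ∏ i, A (xv i, y))]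
    exact Finset.sum_congr rfl fun yv _ => Finset.prod_comm
  rw [gridU, eavg]
  simp only [key, eavg, div_pow, ← Finset.sum_div, card_fn_real]
  rw [div_div, mul_comm (((Fintype.card Y : ℝ)) ^ k)]

lemma gridU_eq_avg_p (A : X × Y → ℝ) (l k : ℕ) :
    gridU A l k =
      eavg (fun yv : Fin k → Y => (eavg fun x => ∏ j, A (x, yv j)) ^ l) := by
  have key : ∀ yv : Fin k → Y, ∑ xv : Fin l → X, ∏ i, ∏ j, A (xv i, yv j)
      = (∑ x, ∏ j, A (x, yv j)) ^ l := by
    intro yv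
    exact sum_prod_fn l (fun x => ∏ j, A (x, yv j))
  rw [gridU, Finset.sum_comm, eavg]
  simp only [key, eavg, div_pow, ← Finset.sum_div, card_fn_real]
  rw [div_div]

end gridids

section Eids

variable {X Y : Type*} [Fintype X] [Fintype Y]

lemma sum_reorder4 {A B C D : Type*} [Fintype A] [Fintype B] [Fintype C] [Fintype D]
    (F : A → B → C → D → ℝ) :
    ∑ a, ∑ b, ∑ c, ∑ d, F a b c d = ∑ b, ∑ d, ∑ a, ∑ c, F a b c d := by
  rw [Finset.sum_comm]
  refine Finset.sum_congr rfl fun b _ => ?_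
  have h1 : ∀ a : A, ∑ c, ∑ d, F a b c d = ∑ d, ∑ c, F a b c d := fun a => Finset.sum_comm
  simp only [h1]
  exact Finset.sum_comm

lemma grid_cons (A : X × Y → ℝ) {m n : ℕ} (x : X) (xv : Fin m → X) (y : Y) (yv : Fin n → Y) :
    (∏ i : Fin (m+1), ∏ j : Fin (n+1),
        A (Fin.cons (α := fun _ => X) x xv i, Fin.cons (α := fun _ => Y) y yv j))
      = (A (x, y) * (∏ j, A (x, yv j)) * ∏ i, A (xv i, y)) * ∏ i, ∏ j, A (xv i, yv j) := by
  simp only [Fin.prod_univ_succ, Fin.cons_zero, Fin.cons_succ]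
  rw [Finset.prod_mul_distrib]
  ring

lemma E1 [Nonempty X] [Nonempty Y] (A : X × Y → ℝ) (m n : ℕ) :
    eavg (fun w : (Fin m → X) × (Fin n → Y) =>
      (∏ i, ∏ j, A (w.1 i, w.2 j)) *
        eavg (fun z : X × Y => A z * (∏ j, A (z.1, w.2 j)) * ∏ i, A (w.1 i, z.2)))
      = gridU A (m + 1) (n + 1) := by
  have grid : (∑ xv : Fin (m+1) → X, ∑ yv : Fin (n+1) → Y, ∏ i, ∏ j, A (xv i, yv j))
      = ∑ xv' : Fin m → X, ∑ yv' : Fin n → Y,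
          (∏ i, ∏ j, A (xv' i, yv' j)) *
            ∑ x, ∑ y, A (x, y) * (∏ j, A (x, yv' j)) * ∏ i, A (xv' i, y) := by
    rw [sum_fn_succ]
    have inner : ∀ (x : X) (xv' : Fin m → X),
        (∑ yv : Fin (n+1) → Y, ∏ i : Fin (m+1), ∏ j,
            A (Fin.cons (α := fun _ => X) x xv' i, yv j))
          = ∑ y, ∑ yv' : Fin n → Y,
              (A (x,y) * (∏ j, A (x, yv' j)) * ∏ i, A (xv' i, y)) *
                ∏ i, ∏ j, A (xv' i, yv' j) := by
      intro x xv'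
      rw [sum_fn_succ]
      exact Finset.sum_congr rfl fun y _ =>
        Finset.sum_congr rfl fun yv' _ => grid_cons A x xv' y yv'
    simp only [inner]
    have hre := sum_reorder4 (F := fun (x : X) (xv' : Fin m → X) (y : Y) (yv' : Fin n → Y) =>
      (A (x,y) * (∏ j, A (x, yv' j)) * ∏ i, A (xv' i, y)) * ∏ i, ∏ j, A (xv' i, yv' j))
    rw [hre]
    refine Finset.sum_congr rfl fun xv' _ => Finset.sum_congr rfl fun yv' _ => ?_
    simp only [Finset.mul_sum]
    exact Finset.sum_congr rfl fun x _ => Finset.sum_congr rfl fun y _ => by ring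
  rw [gridU, grid, eavg]
  simp only [eavg, Fintype.sum_prod_type, Fintype.card_prod]
  push_cast [Fintype.card_fun, Fintype.card_fin]
  simp only [← mul_div_assoc]
  simp only [← Finset.sum_div]
  rw [div_div]
  congr 1
  ring

lemma E2 [Nonempty X] [Nonempty Y] (A : X × Y → ℝ) (m n : ℕ) :
    eavg (fun w : (Fin m → X) × (Fin n → Y) =>
      (∏ i, ∏ j, A (w.1 i, w.2 j)) *
        (eavg (fun x => ∏ j, A (x, w.2 j)) * eavg (fun y => ∏ i, A (w.1 i, y))))
      = eavg (fun z : X × (Fin m → X) =>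
          (eavg fun y => ∏ i, A (z.2 i, y)) *
            (eavg fun y => ∏ i : Fin (m+1),
              A (Fin.cons (α := fun _ => X) z.1 z.2 i, y)) ^ n) := by
  have key2 : ∀ xv' : Fin m → X,
      ∑ yv' : Fin n → Y, (∏ i, ∏ j, A (xv' i, yv' j)) * ∑ x, ∏ j, A (x, yv' j)
        = ∑ x, (∑ y, ∏ i : Fin (m+1), A (Fin.cons (α := fun _ => X) x xv' i, y)) ^ n := by
    intro xv'
    have swap : ∑ yv' : Fin n → Y, (∏ i, ∏ j, A (xv' i, yv' j)) * ∑ x, ∏ j, A (x, yv' j)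
        = ∑ x : X, ∑ yv' : Fin n → Y, ∏ j, (A (x, yv' j) * ∏ i, A (xv' i, yv' j)) := by
      simp only [Finset.mul_sum]
      rw [Finset.sum_comm]
      refine Finset.sum_congr rfl fun x _ => Finset.sum_congr rfl fun yv' _ => ?_
      rw [Finset.prod_mul_distrib, mul_comm]
      congr 1
      exact Finset.prod_comm
    rw [swap]
    refine Finset.sum_congr rfl fun x _ => ?_
    rw [sum_prod_fn n (fun y => A (x, y) * ∏ i, A (xv' i, y))]
    congr 1
    refine Finset.sum_congr rfl fun y _ => ?_
    rw [Fin.prod_univ_succ]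
    simp [Fin.cons_zero, Fin.cons_succ]
  have per : ∀ xv' : Fin m → X,
      ∑ yv' : Fin n → Y, (∏ i, ∏ j, A (xv' i, yv' j)) *
          ((∑ x, ∏ j, A (x, yv' j)) * ∑ y, ∏ i, A (xv' i, y))
        = (∑ y, ∏ i, A (xv' i, y)) *
            ∑ x, (∑ y, ∏ i : Fin (m+1), A (Fin.cons (α := fun _ => X) x xv' i, y)) ^ n := by
    intro xv'
    rw [← key2 xv', Finset.mul_sum]
    exact Finset.sum_congr rfl fun yv' _ => by ring
  rw [eavg, Fintype.sum_prod_type, eavg, Fintype.sum_prod_type]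
  simp only [eavg]
  have norm1 : ∀ (xv' : Fin m → X) (yv' : Fin n → Y),
      (∏ i, ∏ j, A (xv' i, yv' j)) *
        ((∑ x, ∏ j, A (x, yv' j)) / (Fintype.card X : ℝ) *
          ((∑ y, ∏ i, A (xv' i, y)) / (Fintype.card Y : ℝ)))
      = ((∏ i, ∏ j, A (xv' i, yv' j)) *
          ((∑ x, ∏ j, A (x, yv' j)) * ∑ y, ∏ i, A (xv' i, y))) /
          ((Fintype.card X : ℝ) * (Fintype.card Y : ℝ)) := by
    intros; ring
  have norm2 : ∀ (x : X) (xv' : Fin m → X),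
      ((∑ y, ∏ i, A (xv' i, y)) / (Fintype.card Y : ℝ)) *
        ((∑ y, ∏ i : Fin (m+1), A (Fin.cons (α := fun _ => X) x xv' i, y)) /
            (Fintype.card Y : ℝ)) ^ n
      = ((∑ y, ∏ i, A (xv' i, y)) *
          (∑ y, ∏ i : Fin (m+1), A (Fin.cons (α := fun _ => X) x xv' i, y)) ^ n) /
          ((Fintype.card Y : ℝ) * (Fintype.card Y : ℝ) ^ n) := by
    intros
    rw [div_pow]
    ring
  simp only [norm1, norm2]
  simp only [← Finset.sum_div, div_div]
  have final : (∑ xv' : Fin m → X, ∑ yv' : Fin n → Y,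
        (∏ i, ∏ j, A (xv' i, yv' j)) *
          ((∑ x, ∏ j, A (x, yv' j)) * ∑ y, ∏ i, A (xv' i, y)))
      = ∑ x : X, ∑ xv' : Fin m → X,
          ((∑ y, ∏ i, A (xv' i, y)) *
            (∑ y, ∏ i : Fin (m+1), A (Fin.cons (α := fun _ => X) x xv' i, y)) ^ n) := by
    calc (∑ xv' : Fin m → X, ∑ yv' : Fin n → Y,
          (∏ i, ∏ j, A (xv' i, yv' j)) *
            ((∑ x, ∏ j, A (x, yv' j)) * ∑ y, ∏ i, A (xv' i, y)))
        = ∑ xv' : Fin m → X, (∑ y, ∏ i, A (xv' i, y)) *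
            ∑ x, (∑ y, ∏ i : Fin (m+1),
              A (Fin.cons (α := fun _ => X) x xv' i, y)) ^ n :=
          Finset.sum_congr rfl fun xv' _ => per xv'
      _ = ∑ xv' : Fin m → X, ∑ x : X, (∑ y, ∏ i, A (xv' i, y)) *
            (∑ y, ∏ i : Fin (m+1),
              A (Fin.cons (α := fun _ => X) x xv' i, y)) ^ n := by
          simp only [Finset.mul_sum]
      _ = _ := Finset.sum_comm
  rw [final]
  congr 1
  push_cast [Fintype.card_prod, Fintype.card_fun, Fintype.card_fin]
  ring

end Eids

section rounding

lemma roundOneSide {T : Type*} [Fintype T] (w g : T → ℝ) (hg : ∀ t, 0 ≤ g t ∧ g t ≤ 1) :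
    ∑ t, g t * w t ≤ ∑ t ∈ univ.filter (fun t => 0 ≤ w t), w t := by
  classical
  rw [Finset.sum_filter]
  refine Finset.sum_le_sum fun t _ => ?_
  by_cases h : 0 ≤ w t
  · simp only [h, if_true]
    exact mul_le_of_le_one_left h (hg t).2
  · simp only [h, if_false]
    push_neg at h
    have := (hg t).1
    nlinarith

lemma rounding {X Y : Type*} [Fintype X] [Fintype Y] (B : X → Y → ℝ) (u : X → ℝ) (v : Y → ℝ)
    (hu : ∀ x, 0 ≤ u x ∧ u x ≤ 1) (hv : ∀ y, 0 ≤ v y ∧ v y ≤ 1) :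
    ∃ (X' : Finset X) (Y' : Finset Y),
      (∑ x, ∑ y, B x y * u x * v y) ≤ ∑ x ∈ X', ∑ y ∈ Y', B x y := by
  classical
  set w : X → ℝ := fun x => ∑ y, B x y * v y with hw
  set X' : Finset X := univ.filter (fun x => 0 ≤ w x) with hX'
  have step1 : ∑ x, ∑ y, B x y * u x * v y ≤ ∑ x ∈ X', w x := by
    have e : ∀ x, ∑ y, B x y * u x * v y = u x * w x := by
      intro x
      rw [hw, Finset.mul_sum]
      exact Finset.sum_congr rfl fun y _ => by ring
    simp only [e]
    exact roundOneSide w u hu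
  set w2 : Y → ℝ := fun y => ∑ x ∈ X', B x y with hw2
  set Y' : Finset Y := univ.filter (fun y => 0 ≤ w2 y) with hY'
  have step2 : ∑ x ∈ X', w x ≤ ∑ y ∈ Y', w2 y := by
    have e2 : ∑ x ∈ X', w x = ∑ y, v y * w2 y := by
      rw [hw2]
      simp only [hw, Finset.mul_sum]
      rw [Finset.sum_comm]
      exact Finset.sum_congr rfl fun x _ => Finset.sum_congr rfl fun y _ => by ring
    rw [e2]
    exact roundOneSide w2 v hv
  refine ⟨X', Y', ?_⟩
  have : ∑ y ∈ Y', w2 y = ∑ x ∈ X', ∑ y ∈ Y', B x y := by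
    rw [hw2]
    exact Finset.sum_comm
  linarith [step1, step2]

end rounding

set_option maxHeartbeats 1000000 in
lemma sifting_core {X Y : Type} [Fintype X] [Fintype Y] [Nonempty X] [Nonempty Y]
    (A : X × Y → ℝ) (θ : ℝ) (l k : ℕ)
    (hA : ∀ p, 0 ≤ A p ∧ A p ≤ 1) (hθ : 0 < θ) (hl : 0 < l) (hk : 0 < k)
    (hα : 0 < eavg A)
    (hnorm : (1 + θ) * eavg A ≤ gridNorm A l k) :
    ∃ (X' : Finset X) (Y' : Finset Y),
      θ / 2 * eavg A ^ (l * k) * ((Fintype.card X : ℝ) * Fintype.card Y) ≤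
        ∑ x ∈ X', ∑ y ∈ Y', (A (x, y) - (1 + θ / 2) * eavg A) := by
  obtain ⟨m, rfl⟩ : ∃ m, l = m + 1 := ⟨l - 1, by omega⟩
  obtain ⟨n, rfl⟩ : ∃ n, k = n + 1 := ⟨k - 1, by omega⟩
  set α := eavg A with hαdef
  set c : ℝ := (1 + θ / 2) * α with hcdef
  set U : ℝ := gridU A (m + 1) (n + 1) with hUdef
  set L : ℕ := (m + 1) * (n + 1) with hLdef
  set Lr : ℝ := ((m : ℝ) + 1) * ((n : ℝ) + 1) with hLrdef
  have hLr0 : (0 : ℝ) < Lr := by positivity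
  have hLcast : (L : ℝ) = Lr := by rw [hLdef, hLrdef]; push_cast; ring
  -- pointwise bounds
  have hq01 : ∀ {N' : ℕ} (xv : Fin N' → X),
      0 ≤ eavg (fun y => ∏ i, A (xv i, y)) ∧ eavg (fun y => ∏ i, A (xv i, y)) ≤ 1 := by
    intro N' xv
    constructor
    · exact eavg_nonneg fun y => Finset.prod_nonneg fun i _ => (hA _).1
    · exact eavg_le_one fun y => Finset.prod_le_one
        (fun i _ => (hA _).1) (fun i _ => (hA _).2)
  have hp01 : ∀ {N' : ℕ} (yv : Fin N' → Y),
      0 ≤ eavg (fun x => ∏ j, A (x, yv j)) ∧ eavg (fun x => ∏ j, A (x, yv j)) ≤ 1 := by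
    intro N' yv
    constructor
    · exact eavg_nonneg fun x => Finset.prod_nonneg fun j _ => (hA _).1
    · exact eavg_le_one fun x => Finset.prod_le_one
        (fun j _ => (hA _).1) (fun j _ => (hA _).2)
  have hU_q : U = eavg (fun xv : Fin (m+1) → X =>
      (eavg fun y => ∏ i, A (xv i, y)) ^ (n+1)) := gridU_eq_avg_q A (m+1) (n+1)
  have hU_p : U = eavg (fun yv : Fin (n+1) → Y =>
      (eavg fun x => ∏ j, A (x, yv j)) ^ (m+1)) := gridU_eq_avg_p A (m+1) (n+1)
  have hU0 : 0 ≤ U := by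
    rw [hU_p]
    exact eavg_nonneg fun yv => pow_nonneg (hp01 yv).1 _
  have hB0 : 0 < (1 + θ) * α := by positivity
  -- from the norm hypothesis
  have hUge : ((1 + θ) * α) ^ L ≤ U := by
    have h1 : (1 + θ) * α ≤ U ^ ((1:ℝ) / Lr) := by
      have := hnorm
      rw [gridNorm, abs_of_nonneg hU0] at this
      convert this using 3
      push_cast
      ring
    calc ((1 + θ) * α) ^ L = ((1 + θ) * α) ^ ((L : ℝ)) := by
          rw [Real.rpow_natCast]
      _ ≤ (U ^ ((1:ℝ) / Lr)) ^ ((L : ℝ)) := by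
          apply Real.rpow_le_rpow hB0.le h1
          positivity
      _ = U := by
          rw [← Real.rpow_mul hU0, hLcast, one_div, inv_mul_cancel₀ hLr0.ne', Real.rpow_one]
  have hUpos : 0 < U := lt_of_lt_of_le (pow_pos hB0 L) hUge
  -- the V quantity and Hölder
  set V : ℝ := eavg (fun z : X × (Fin m → X) =>
      (eavg fun y => ∏ i, A (z.2 i, y)) *
        (eavg fun y => ∏ i : Fin (m+1),
          A (Fin.cons (α := fun _ => X) z.1 z.2 i, y)) ^ n) with hVdef
  have hV0 : 0 ≤ V := by
    apply eavg_nonneg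
    intro z
    exact mul_nonneg (hq01 _).1 (pow_nonneg (hq01 _).1 _)
  have hUrt : (1 + θ) * α ≤ U ^ ((1:ℝ) / Lr) := by
    have := hnorm
    rw [gridNorm, abs_of_nonneg hU0] at this
    convert this using 3
    push_cast
    ring
  have hVU : V ≤ U ^ (1 - 1 / Lr) := by
    set F : X × (Fin m → X) → ℝ := fun z =>
      eavg fun y => ∏ i : Fin (m+1), A (Fin.cons (α := fun _ => X) z.1 z.2 i, y) with hFdef
    set G : X × (Fin m → X) → ℝ := fun z => eavg fun y => ∏ i, A (z.2 i, y) with hGdef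
    have hF0 : ∀ z, 0 ≤ F z := fun z => (hq01 _).1
    have hG0 : ∀ z, 0 ≤ G z := fun z => (hq01 _).1
    have hhol := holder_eavg F G hF0 hG0 n
    have hVform : V = eavg fun z => F z ^ n * G z := by
      rw [hVdef]
      congr 1
      funext z
      rw [hFdef, hGdef]
      ring
    have hFU : eavg (fun z : X × (Fin m → X) => F z ^ (n+1)) = U := by
      rw [hU_q]
      exact eavg_equiv (Fin.consEquiv (fun _ : Fin (m+1) => X))
        (fun xv => (eavg fun y => ∏ i, A (xv i, y)) ^ (n+1))
    have hGW : eavg (fun z : X × (Fin m → X) => G z ^ (n+1))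
        = eavg (fun yv : Fin (n+1) → Y => (eavg fun x => ∏ j, A (x, yv j)) ^ m) := by
      have h1 : eavg (fun z : X × (Fin m → X) => G z ^ (n+1))
          = eavg (fun xv' : Fin m → X => (eavg fun y => ∏ i, A (xv' i, y)) ^ (n+1)) :=
        eavg_snd (S := X) (g := fun xv' : Fin m → X =>
          (eavg fun y => ∏ i, A (xv' i, y)) ^ (n+1))
      rw [h1, ← gridU_eq_avg_q A m (n+1), gridU_eq_avg_p A m (n+1)]
    have hLy : eavg (fun yv : Fin (n+1) → Y => (eavg fun x => ∏ j, A (x, yv j)) ^ m)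
        ≤ U ^ ((m:ℝ) / (m+1)) := by
      have h2 := holder_eavg (fun yv : Fin (n+1) → Y => eavg fun x => ∏ j, A (x, yv j))
        (fun _ => 1) (fun yv => (hp01 _).1) (fun _ => zero_le_one) m
      simp only [mul_one, one_pow] at h2
      rw [eavg_one, Real.one_rpow, mul_one] at h2
      rwa [← hU_p] at h2
    have h3 : eavg (fun z : X × (Fin m → X) => G z ^ (n+1)) ≤ U ^ ((m:ℝ)/(m+1)) := by
      rw [hGW]; exact hLy
    have h4 : eavg (fun z : X × (Fin m → X) => G z ^ (n+1)) ^ ((1:ℝ)/(n+1))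
        ≤ (U ^ ((m:ℝ)/(m+1))) ^ ((1:ℝ)/(n+1)) :=
      Real.rpow_le_rpow (eavg_nonneg fun z => pow_nonneg (hG0 z) _) h3 (by positivity)
    calc V = eavg fun z => F z ^ n * G z := hVform
      _ ≤ eavg (fun z => F z ^ (n+1)) ^ ((n:ℝ)/(n+1)) *
            eavg (fun z => G z ^ (n+1)) ^ ((1:ℝ)/(n+1)) := hhol
      _ ≤ U ^ ((n:ℝ)/(n+1)) * (U ^ ((m:ℝ)/(m+1))) ^ ((1:ℝ)/(n+1)) := by
          rw [hFU]
          exact mul_le_mul_of_nonneg_left h4 (Real.rpow_nonneg hU0 _)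
      _ = U ^ (1 - 1/Lr) := by
          rw [← Real.rpow_mul hU0, ← Real.rpow_add hUpos]
          congr 1
          rw [hLrdef]
          have hm : ((m:ℝ)+1) ≠ 0 := by positivity
          have hn : ((n:ℝ)+1) ≠ 0 := by positivity
          field_simp
          ring
  -- main quantitative bound
  have hstep : θ / 2 * α ^ L ≤ U - c * V := by
    have hc0 : (0:ℝ) ≤ c := by
      rw [hcdef]
      positivity
    have hcV : c * V ≤ c * U ^ (1 - 1/Lr) := mul_le_mul_of_nonneg_left hVU hc0
    have hUsplit : U ^ (1 - 1/Lr) * U ^ ((1:ℝ)/Lr) = U := by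
      rw [← Real.rpow_add hUpos]
      have he : (1 - 1/Lr) + (1:ℝ)/Lr = 1 := by ring
      rw [he, Real.rpow_one]
    have hL1 : 1 ≤ L := by
      rw [hLdef]
      exact Nat.one_le_iff_ne_zero.mpr (Nat.mul_ne_zero (Nat.succ_ne_zero m) (Nat.succ_ne_zero n))
    have hLr1 : (1:ℝ) ≤ Lr := by
      rw [← hLcast]
      exact_mod_cast hL1
    have hexp0 : (0:ℝ) ≤ 1 - 1/Lr := by
      have : 1/Lr ≤ 1 := by
        rw [div_le_one hLr0]
        exact hLr1
      linarith
    have hUfloor : α ^ (L-1) ≤ U ^ (1 - 1/Lr) := by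
      have h5 : (((1+θ)*α) ^ L : ℝ) ^ (1 - 1/Lr) ≤ U ^ (1 - 1/Lr) :=
        Real.rpow_le_rpow (by positivity) hUge hexp0
      have h6 : (((1+θ)*α) ^ L : ℝ) ^ (1 - 1/Lr) = ((1+θ)*α) ^ (L-1) := by
        rw [← Real.rpow_natCast ((1+θ)*α) L, ← Real.rpow_mul hB0.le, hLcast]
        have he2 : Lr * (1 - 1/Lr) = ((L-1 : ℕ) : ℝ) := by
          rw [Nat.cast_sub hL1, hLcast]
          push_cast
          field_simp
        rw [he2, Real.rpow_natCast]
      have h7 : α ^ (L-1) ≤ ((1+θ)*α) ^ (L-1) := by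
        apply pow_le_pow_left₀ hα.le
        nlinarith
      linarith [h5, h7, h6.symm.le, h6.le]
    have hrt2 : θ/2 * α ≤ U ^ ((1:ℝ)/Lr) - c := by
      rw [hcdef]
      have := hUrt
      nlinarith
    have hmul : α ^ (L-1) * (θ/2 * α) ≤ U ^ (1 - 1/Lr) * (U ^ ((1:ℝ)/Lr) - c) := by
      apply mul_le_mul hUfloor hrt2 (by positivity)
        (le_trans (by positivity) hUfloor)
    have heq1 : α ^ (L-1) * (θ/2 * α) = θ/2 * α ^ L := by
      have : α ^ (L-1) * α = α ^ L := by
        rw [← pow_succ, Nat.sub_add_cancel hL1]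
      nlinarith [this]
    have heq2 : U ^ (1 - 1/Lr) * (U ^ ((1:ℝ)/Lr) - c)
        = U - c * U ^ (1 - 1/Lr) := by
      rw [mul_sub, hUsplit]
      ring
    linarith [hmul, hcV]
  -- averaging identity
  have hkey : eavg (fun w : (Fin m → X) × (Fin n → Y) =>
      (∏ i, ∏ j, A (w.1 i, w.2 j)) *
        eavg (fun z : X × Y =>
          (A z - c) * (∏ j, A (z.1, w.2 j)) * ∏ i, A (w.1 i, z.2)))
      = U - c * V := by
    have hE1 := E1 A m n
    have hE2 := E2 A m n
    have hsplit : ∀ w : (Fin m → X) × (Fin n → Y),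
        eavg (fun z : X × Y => (A z - c) * (∏ j, A (z.1, w.2 j)) * ∏ i, A (w.1 i, z.2))
          = eavg (fun z : X × Y => A z * (∏ j, A (z.1, w.2 j)) * ∏ i, A (w.1 i, z.2))
            - c * (eavg (fun x => ∏ j, A (x, w.2 j)) * eavg (fun y => ∏ i, A (w.1 i, y))) := by
      intro w
      rw [← eavg_prod_mul (fun x => ∏ j, A (x, w.2 j)) (fun y => ∏ i, A (w.1 i, y))]
      rw [← eavg_sub_mul]
      congr 1
      funext z
      ring
    calc eavg (fun w : (Fin m → X) × (Fin n → Y) =>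
          (∏ i, ∏ j, A (w.1 i, w.2 j)) *
            eavg (fun z : X × Y =>
              (A z - c) * (∏ j, A (z.1, w.2 j)) * ∏ i, A (w.1 i, z.2)))
        = eavg (fun w : (Fin m → X) × (Fin n → Y) =>
            (∏ i, ∏ j, A (w.1 i, w.2 j)) *
              eavg (fun z : X × Y => A z * (∏ j, A (z.1, w.2 j)) * ∏ i, A (w.1 i, z.2))
            - c * ((∏ i, ∏ j, A (w.1 i, w.2 j)) *
              (eavg (fun x => ∏ j, A (x, w.2 j)) * eavg (fun y => ∏ i, A (w.1 i, y))))) := by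
          congr 1
          funext w
          rw [hsplit w]
          ring
      _ = U - c * V := by
          rw [eavg_sub_mul, hE1, hE2, ← hUdef, ← hVdef]
  -- extract a good pair
  obtain ⟨w, hw⟩ := exists_eavg_le (fun w : (Fin m → X) × (Fin n → Y) =>
      (∏ i, ∏ j, A (w.1 i, w.2 j)) *
        eavg (fun z : X × Y =>
          (A z - c) * (∏ j, A (z.1, w.2 j)) * ∏ i, A (w.1 i, z.2)))
  rw [hkey] at hw
  have hC01 : 0 ≤ (∏ i, ∏ j, A (w.1 i, w.2 j)) ∧ (∏ i, ∏ j, A (w.1 i, w.2 j)) ≤ 1 := by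
    constructor
    · exact Finset.prod_nonneg fun i _ => Finset.prod_nonneg fun j _ => (hA _).1
    · exact Finset.prod_le_one
        (fun i _ => Finset.prod_nonneg fun j _ => (hA _).1)
        (fun i _ => Finset.prod_le_one (fun j _ => (hA _).1) (fun j _ => (hA _).2))
  have hθα : 0 < θ / 2 * α ^ L := by positivity
  have hΦ : θ / 2 * α ^ L ≤ eavg (fun z : X × Y =>
      (A z - c) * (∏ j, A (z.1, w.2 j)) * ∏ i, A (w.1 i, z.2)) := by
    set Φ := eavg (fun z : X × Y =>
      (A z - c) * (∏ j, A (z.1, w.2 j)) * ∏ i, A (w.1 i, z.2))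
    set C := ∏ i, ∏ j, A (w.1 i, w.2 j)
    have h1 : θ / 2 * α ^ L ≤ C * Φ := le_trans hstep hw
    have hΦpos : 0 < Φ := by
      by_contra hcon
      push_neg at hcon
      nlinarith [mul_nonneg hC01.1 (neg_nonneg.mpr hcon)]
    nlinarith [mul_nonneg (sub_nonneg.mpr hC01.2) hΦpos.le]
  -- unfold the inner average and round
  have hN : (0:ℝ) < (Fintype.card X : ℝ) * (Fintype.card Y : ℝ) := by
    have h1 : 0 < Fintype.card X := Fintype.card_pos
    have h2 : 0 < Fintype.card Y := Fintype.card_pos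
    positivity
  have hsum : θ / 2 * α ^ L * ((Fintype.card X : ℝ) * Fintype.card Y) ≤
      ∑ x : X, ∑ y : Y, (A (x, y) - c) * (∏ j, A (x, w.2 j)) * ∏ i, A (w.1 i, y) := by
    rw [eavg, Fintype.card_prod, Nat.cast_mul, Fintype.sum_prod_type, le_div_iff₀ hN] at hΦ
    exact hΦ
  obtain ⟨X', Y', hround⟩ := rounding (fun x y => A (x, y) - c)
    (fun x => ∏ j, A (x, w.2 j)) (fun y => ∏ i, A (w.1 i, y))
    (fun x => ⟨Finset.prod_nonneg fun j _ => (hA _).1,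
      Finset.prod_le_one (fun j _ => (hA _).1) (fun j _ => (hA _).2)⟩)
    (fun y => ⟨Finset.prod_nonneg fun i _ => (hA _).1,
      Finset.prod_le_one (fun i _ => (hA _).1) (fun i _ => (hA _).2)⟩)
  exact ⟨X', Y', le_trans hsum hround⟩

/-- sifting a rectangle: (a) if the grid norm of `A` notably exceeds
its density then some large rectangle has notably increased density; (b) consequently,
spread functions have controlled grid norms. -/
theorem sifting :
    ∀ (X Y : Type) [Fintype X] [Fintype Y], Nonempty X → Nonempty Y →
      ∀ (A : X × Y → ℝ) (δ ε : ℝ) (l k : ℕ),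
        (∀ p, 0 ≤ A p ∧ A p ≤ 1) → 0 < δ → δ < 1 → 0 < ε → ε < 1 →
        0 < l → 0 < k →
        δ ≤ eavg (fun p => |A p|) →
        (((1 + ε) * eavg (fun p => |A p|) ≤ gridNorm A l k →
            ∃ (X' : Finset X) (Y' : Finset Y),
              (1 + ε / 2) * eavg (fun p => |A p|) ≤
                (∑ x ∈ X', ∑ y ∈ Y', A (x, y)) / ((X'.card : ℝ) * Y'.card) ∧
              1 / 2 * ε * δ ^ (l * k + 1) ≤
                ((X'.card : ℝ) * Y'.card) / ((Fintype.card X : ℝ) * Fintype.card Y)) ∧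
          ∀ r : ℝ,
            ((l : ℝ) * k + 1) * Real.logb 2 (1 / δ) + Real.logb 2 (1 / ε) ≤ r →
            Spread A r ε →
            gridNorm A l k ≤ (1 + 2 * ε) * eavg (fun p => |A p|)) := by
  intro X Y _ _ hX hY A δ ε l k hA hδ hδ1 hε hε1 hl hk hδα
  have _inst1 : Nonempty X := hX
  have _inst2 : Nonempty Y := hY
  have habs : (fun p : X × Y => |A p|) = A := funext fun p => abs_of_nonneg (hA p).1
  rw [habs] at hδα ⊢
  have hα : 0 < eavg A := lt_of_lt_of_le hδ hδα
  have hcX : (0:ℝ) < (Fintype.card X : ℝ) := by exact_mod_cast Fintype.card_pos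
  have hcY : (0:ℝ) < (Fintype.card Y : ℝ) := by exact_mod_cast Fintype.card_pos
  have hN : (0:ℝ) < (Fintype.card X : ℝ) * (Fintype.card Y : ℝ) := mul_pos hcX hcY
  have hαδpow : δ ^ (l*k+1) ≤ eavg A ^ (l*k) := by
    calc δ ^ (l*k+1) ≤ δ ^ (l*k) := by
          apply pow_le_pow_of_le_one hδ.le hδ1.le
          omega
      _ ≤ eavg A ^ (l*k) := pow_le_pow_left₀ hδ.le hδα _
  -- a generic consequence builder
  have main : ∀ θ : ℝ, 0 < θ →
      (1 + θ) * eavg A ≤ gridNorm A l k →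
      ∃ (X' : Finset X) (Y' : Finset Y),
        θ/2 * eavg A ^ (l*k) * ((Fintype.card X : ℝ) * Fintype.card Y) ≤
            (X'.card : ℝ) * Y'.card ∧
        (X'.card : ℝ) * Y'.card * ((1 + θ/2) * eavg A) +
            θ/2 * eavg A ^ (l*k) * ((Fintype.card X : ℝ) * Fintype.card Y) ≤
          ∑ x ∈ X', ∑ y ∈ Y', A (x, y) := by
    intro θ hθ hnorm
    obtain ⟨X', Y', hsum⟩ := sifting_core A θ l k hA hθ hl hk hα hnorm
    have hsub : ∑ x ∈ X', ∑ y ∈ Y', (A (x,y) - (1 + θ/2) * eavg A)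
        = (∑ x ∈ X', ∑ y ∈ Y', A (x,y))
          - (X'.card : ℝ) * Y'.card * ((1 + θ/2) * eavg A) := by
      simp only [Finset.sum_sub_distrib, Finset.sum_const, nsmul_eq_mul]
      ring
    have hone : ∑ x ∈ X', ∑ y ∈ Y', (A (x,y) - (1 + θ/2) * eavg A)
        ≤ (X'.card : ℝ) * Y'.card := by
      have hc0 : (0:ℝ) ≤ (1 + θ/2) * eavg A := by positivity
      calc ∑ x ∈ X', ∑ y ∈ Y', (A (x,y) - (1 + θ/2) * eavg A)
          ≤ ∑ x ∈ X', ∑ y ∈ Y', (1:ℝ) := by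
            refine Finset.sum_le_sum fun x _ => Finset.sum_le_sum fun y _ => ?_
            have := (hA (x,y)).2
            linarith
        _ = (X'.card : ℝ) * Y'.card := by
            simp [mul_comm]
    exact ⟨X', Y', le_trans hsum hone, by linarith [hsum, hsub]⟩
  constructor
  · -- part (a)
    intro hnorm
    obtain ⟨X', Y', hcard, hlow⟩ := main ε hε hnorm
    have hMpos : 0 < ε/2 * eavg A ^ (l*k) * ((Fintype.card X : ℝ) * Fintype.card Y) := by
      positivity
    have hRpos : (0:ℝ) < (X'.card : ℝ) * Y'.card := lt_of_lt_of_le hMpos hcard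
    refine ⟨X', Y', ?_, ?_⟩
    · rw [le_div_iff₀ hRpos]
      nlinarith [hlow, hMpos]
    · have hstep1 : 1/2 * ε * δ ^ (l*k+1) ≤ ε/2 * eavg A ^ (l*k) := by
        have h10 := mul_le_mul_of_nonneg_left hαδpow (by positivity : (0:ℝ) ≤ ε/2)
        linarith
      have hstep2 : ε/2 * eavg A ^ (l*k)
          ≤ ((X'.card : ℝ) * Y'.card) / ((Fintype.card X : ℝ) * Fintype.card Y) := by
        rw [le_div_iff₀ hN]
        exact hcard
      linarith
  · -- part (b)
    intro r hr hspread
    by_contra hcon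
    push_neg at hcon
    have h2ε : (0:ℝ) < 2 * ε := by linarith
    obtain ⟨X', Y', hcard, hlow⟩ := main (2*ε) h2ε hcon.le
    have hMpos : 0 < 2*ε/2 * eavg A ^ (l*k) * ((Fintype.card X : ℝ) * Fintype.card Y) := by
      positivity
    have hRpos : (0:ℝ) < (X'.card : ℝ) * Y'.card := lt_of_lt_of_le hMpos hcard
    -- 2^(-r) ≤ ε * δ^(l*k+1)
    have h2r : (2:ℝ)^(-r) ≤ ε * δ^(l*k+1) := by
      have hδi : (0:ℝ) < 1/δ := by positivity
      have hεi : (0:ℝ) < 1/ε := by positivity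
      set s : ℝ := ((l:ℝ)*k+1) * Real.logb 2 (1/δ) + Real.logb 2 (1/ε) with hsdef
      have hmono : (2:ℝ)^(-r) ≤ (2:ℝ)^(-s) :=
        Real.rpow_le_rpow_of_exponent_le one_le_two (by linarith [hr])
      have hcalc : (2:ℝ)^(-s) = δ^(l*k+1) * ε := by
        rw [hsdef, neg_add, Real.rpow_add two_pos]
        have h1 : (2:ℝ)^(-(((l:ℝ)*k+1) * Real.logb 2 (1/δ))) = δ^(l*k+1) := by
          have he : -(((l:ℝ)*k+1) * Real.logb 2 (1/δ))
              = Real.logb 2 (1/δ) * (-((l:ℝ)*k+1)) := by ring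
          rw [he, Real.rpow_mul (by norm_num : (0:ℝ) ≤ 2),
              Real.rpow_logb two_pos (by norm_num) hδi]
          rw [one_div, Real.inv_rpow hδ.le, Real.rpow_neg hδ.le, inv_inv]
          rw [← Real.rpow_natCast δ (l*k+1)]
          congr 1
          push_cast
          ring
        have h2 : (2:ℝ)^(-(Real.logb 2 (1/ε))) = ε := by
          rw [Real.rpow_neg (by norm_num : (0:ℝ) ≤ 2),
              Real.rpow_logb two_pos (by norm_num) hεi, one_div, inv_inv]
        rw [h1, h2]
      rw [hcalc] at hmono
      rw [mul_comm]
      exact hmono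
    have hspreadcond : (2:ℝ)^(-r) * ((Fintype.card X : ℝ) * Fintype.card Y)
        ≤ (X'.card : ℝ) * Y'.card := by
      calc (2:ℝ)^(-r) * ((Fintype.card X : ℝ) * Fintype.card Y)
          ≤ (ε * δ^(l*k+1)) * ((Fintype.card X : ℝ) * Fintype.card Y) := by
            exact mul_le_mul_of_nonneg_right h2r hN.le
        _ ≤ 2*ε/2 * eavg A ^ (l*k) * ((Fintype.card X : ℝ) * Fintype.card Y) := by
            have : ε * δ^(l*k+1) ≤ 2*ε/2 * eavg A ^ (l*k) := by
              have h9 : 2*ε/2 = ε := by ring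
              rw [h9]
              exact mul_le_mul_of_nonneg_left hαδpow hε.le
            exact mul_le_mul_of_nonneg_right this hN.le
        _ ≤ (X'.card : ℝ) * Y'.card := hcard
    have hsp := hspread X' Y' hspreadcond
    rw [div_le_iff₀ hRpos] at hsp
    have h9 : (1 + 2*ε/2) = (1 + ε) := by ring
    rw [h9] at hlow
    nlinarith [hlow, hMpos, hsp]
end

section
/- There exists an absolute constant C > 0 with the following property. Let N be a positive integer, γ ∈ (0,1), let D ⊆ [N]³ be nonempty and γ-pseudorandom with respect to a cube C = X×Y×Z ⊆ [N]³ (with X, Y, Z nonempty), and let T ⊆ D. Define h : X×Y → [0,1] by h(x,y) = (E_{z∈Z} T(x,y,z))/(E_{z∈Z} D(x,y,z)) when E_{z∈Z} D(x,y,z) > 0, and h(x,y) = 0 otherwise. Then |E_{(x,y)∈X×Y}[h(x,y)] − |T ∩ C|/|D ∩ C|| ≤ C·γ^{1/3}. -/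
open Finset

/-- Indicator function of a set `D ⊆ [N]³`. -/
def ind {N : ℕ} (D : Finset (Fin N × Fin N × Fin N)) (x y z : Fin N) : ℝ :=
  if (x, y, z) ∈ D then 1 else 0

/-- Density `μ = |D|/N³` of a set `D ⊆ [N]³`. -/
noncomputable def density {N : ℕ} (D : Finset (Fin N × Fin N × Fin N)) : ℝ :=
  (D.card : ℝ) / (N : ℝ) ^ 3

/-- `a = b(1 ± γ)`, i.e. `b(1-γ) ≤ a ≤ b(1+γ)`. -/
def Approx (a b γ : ℝ) : Prop := b * (1 - γ) ≤ a ∧ a ≤ b * (1 + γ)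

/-- `E_{(x,y,z) ∈ X×Y×Z}[D(x,y,z)]`. -/
noncomputable def avg1 {N : ℕ} (D : Finset (Fin N × Fin N × Fin N))
    (X Y Z : Finset (Fin N)) : ℝ :=
  (∑ x ∈ X, ∑ y ∈ Y, ∑ z ∈ Z, ind D x y z) / ((X.card : ℝ) * Y.card * Z.card)

/-- `E_{(x,y,z,z') ∈ X×Y×Z×Z}[D(x,y,z)·D(x,y,z')]`. -/
noncomputable def avg2Z {N : ℕ} (D : Finset (Fin N × Fin N × Fin N))
    (X Y Z : Finset (Fin N)) : ℝ :=
  (∑ x ∈ X, ∑ y ∈ Y, ∑ z ∈ Z, ∑ z' ∈ Z, ind D x y z * ind D x y z') /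
    ((X.card : ℝ) * Y.card * Z.card * Z.card)

/-- `E_{(x,x',y,z) ∈ X×X×Y×Z}[D(x,y,z)·D(x',y,z)]`. -/
noncomputable def avg2X {N : ℕ} (D : Finset (Fin N × Fin N × Fin N))
    (X Y Z : Finset (Fin N)) : ℝ :=
  (∑ x ∈ X, ∑ x' ∈ X, ∑ y ∈ Y, ∑ z ∈ Z, ind D x y z * ind D x' y z) /
    ((X.card : ℝ) * X.card * Y.card * Z.card)

/-- `E_{(x,y,y',z) ∈ X×Y×Y×Z}[D(x,y,z)·D(x,y',z)]`. -/
noncomputable def avg2Y {N : ℕ} (D : Finset (Fin N × Fin N × Fin N))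
    (X Y Z : Finset (Fin N)) : ℝ :=
  (∑ x ∈ X, ∑ y ∈ Y, ∑ y' ∈ Y, ∑ z ∈ Z, ind D x y z * ind D x y' z) /
    ((X.card : ℝ) * Y.card * Y.card * Z.card)

/-- `D` is `γ`-pseudorandom with respect to the cube `X × Y × Z`. -/
def PseudorandomCube {N : ℕ} (D : Finset (Fin N × Fin N × Fin N)) (γ : ℝ)
    (X Y Z : Finset (Fin N)) : Prop :=
  Approx (avg1 D X Y Z) (density D) γ ∧
  Approx (avg2Z D X Y Z) (density D ^ 2) γ ∧
  Approx (avg2X D X Y Z) (density D ^ 2) γ ∧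
  Approx (avg2Y D X Y Z) (density D ^ 2) γ

/-- `D` is `γ`-pseudorandom with respect to all cubes of size at least `γ·N³`. -/
def PseudorandomLargeCubes {N : ℕ} (D : Finset (Fin N × Fin N × Fin N)) (γ : ℝ) : Prop :=
  ∀ X Y Z : Finset (Fin N),
    γ * (N : ℝ) ^ 3 ≤ (X.card : ℝ) * Y.card * Z.card →
    PseudorandomCube D γ X Y Z


set_option maxHeartbeats 1600000 in
lemma core {ι : Type*} (s : Finset ι) (hs : s.Nonempty) (f g : ι → ℝ) (μ γ : ℝ)
    (hμ : 0 < μ) (hγ0 : 0 < γ) (hγ1 : γ < 1)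
    (hf0 : ∀ i ∈ s, 0 ≤ f i) (hfg : ∀ i ∈ s, f i ≤ g i) (hg1 : ∀ i ∈ s, g i ≤ 1)
    (hAl : (s.card : ℝ) * μ * (1 - γ) ≤ ∑ i ∈ s, g i)
    (hAu : ∑ i ∈ s, g i ≤ (s.card : ℝ) * μ * (1 + γ))
    (hB : ∑ i ∈ s, g i ^ 2 ≤ (s.card : ℝ) * μ ^ 2 * (1 + γ)) :
    |(∑ i ∈ s, (if 0 < g i then f i / g i else 0)) / (s.card : ℝ) -
      (∑ i ∈ s, f i) / (∑ i ∈ s, g i)| ≤ 20 * γ ^ ((1 : ℝ) / 3) := by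
  classical
  set m : ℝ := (s.card : ℝ) with hm
  have hm0 : 0 < m := by
    have : 0 < s.card := Finset.card_pos.2 hs
    rw [hm]; exact_mod_cast this
  set ε : ℝ := γ ^ ((1 : ℝ) / 3) with hε
  have hε0 : 0 < ε := Real.rpow_pos_of_pos hγ0 _
  have hε3 : ε ^ 3 = γ := by
    rw [hε, ← Real.rpow_natCast (γ ^ ((1:ℝ)/3)) 3, ← Real.rpow_mul hγ0.le]
    norm_num
  have hε1 : ε < 1 := by
    by_contra h
    push_neg at h
    nlinarith [hε3, mul_le_mul h h (by linarith) (by linarith)]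
  have hγε : γ ≤ ε := by
    nlinarith [hε3, mul_nonneg (mul_nonneg hε0.le (sub_nonneg.2 hε1.le)) (by linarith : (0:ℝ) ≤ 1+ε)]
  -- positivity of sums
  have hg0 : ∀ i ∈ s, 0 ≤ g i := fun i hi => le_trans (hf0 i hi) (hfg i hi)
  have hSg0 : 0 < ∑ i ∈ s, g i :=
    lt_of_lt_of_le (mul_pos (mul_pos hm0 hμ) (by linarith)) hAl
  have hSf0 : 0 ≤ ∑ i ∈ s, f i := Finset.sum_nonneg hf0
  have hSfg : ∑ i ∈ s, f i ≤ ∑ i ∈ s, g i := Finset.sum_le_sum hfg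
  have hratio : (∑ i ∈ s, f i) / (∑ i ∈ s, g i) ≤ 1 := by
    rw [div_le_one hSg0]; exact hSfg
  have hratio0 : 0 ≤ (∑ i ∈ s, f i) / (∑ i ∈ s, g i) := by positivity
  have hh01 : ∀ i ∈ s, 0 ≤ (if 0 < g i then f i / g i else 0) ∧
      (if 0 < g i then f i / g i else 0) ≤ 1 := by
    intro i hi
    by_cases h : 0 < g i
    · simp only [h, if_true]
      exact ⟨div_nonneg (hf0 i hi) h.le, by rw [div_le_one h]; exact hfg i hi⟩
    · simp [h]
  have hEh0 : 0 ≤ (∑ i ∈ s, (if 0 < g i then f i / g i else 0)) / m :=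
    div_nonneg (Finset.sum_nonneg fun i hi => (hh01 i hi).1) hm0.le
  have hEh1 : (∑ i ∈ s, (if 0 < g i then f i / g i else 0)) / m ≤ 1 := by
    rw [div_le_one hm0]
    calc (∑ i ∈ s, (if 0 < g i then f i / g i else 0)) ≤ ∑ i ∈ s, (1:ℝ) :=
          Finset.sum_le_sum fun i hi => (hh01 i hi).2
      _ = m := by simp [hm]
  -- variance bound
  have hVar : ∑ i ∈ s, (g i - μ)^2 ≤ 3 * γ * m * μ^2 := by
    have expand : ∑ i ∈ s, (g i - μ)^2
        = (∑ i ∈ s, g i ^ 2) - 2*μ*(∑ i ∈ s, g i) + m * μ^2 := by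
      rw [Finset.sum_congr rfl (fun i _ => by ring :
        ∀ i ∈ s, (g i - μ)^2 = g i ^ 2 - 2*μ*g i + μ^2)]
      rw [Finset.sum_add_distrib, Finset.sum_sub_distrib, ← Finset.mul_sum,
        Finset.sum_const, nsmul_eq_mul, hm]
    have h2 : 2*μ*(m * μ * (1-γ)) ≤ 2*μ*(∑ i ∈ s, g i) :=
      mul_le_mul_of_nonneg_left hAl (by linarith)
    rw [expand]; nlinarith [hB]
  -- bad set
  set B : Finset ι := s.filter (fun i => ε*μ < |g i - μ|) with hBdef
  set G : Finset ι := s.filter (fun i => ¬ ε*μ < |g i - μ|) with hGdef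
  have hBs : B ⊆ s := Finset.filter_subset _ _
  have hGs : G ⊆ s := Finset.filter_subset _ _
  have hVarB : ∑ i ∈ B, (g i - μ)^2 ≤ 3 * γ * m * μ^2 :=
    le_trans (Finset.sum_le_sum_of_subset_of_nonneg hBs (fun i _ _ => sq_nonneg _)) hVar
  have hBcard : (B.card : ℝ) ≤ 3 * ε * m := by
    have h1 : (B.card : ℝ) * (ε*μ)^2 ≤ ∑ i ∈ B, (g i - μ)^2 := by
      have h0 := Finset.card_nsmul_le_sum B (fun i => (g i - μ)^2) ((ε*μ)^2)
        (fun i hi => by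
          have h2 := (Finset.mem_filter.1 hi).2
          show (ε*μ)^2 ≤ (g i - μ)^2
          rw [← sq_abs (g i - μ)]
          exact pow_le_pow_left₀ (by positivity) h2.le 2)
      rwa [nsmul_eq_mul] at h0
    have key : (B.card : ℝ) * (ε^2*μ^2) ≤ (3*ε*m) * (ε^2*μ^2) := by
      calc (B.card : ℝ) * (ε^2*μ^2) = (B.card : ℝ) * (ε*μ)^2 := by ring
        _ ≤ ∑ i ∈ B, (g i - μ)^2 := h1
        _ ≤ 3 * γ * m * μ^2 := hVarB
        _ = (3*ε*m) * (ε^2*μ^2) := by rw [← hε3]; ring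
    exact le_of_mul_le_mul_right key (by positivity)
  have hBabs : ∑ i ∈ B, |g i - μ| ≤ 3 * ε^2 * m * μ := by
    have h1 : (∑ i ∈ B, |g i - μ|) * (ε*μ) ≤ ∑ i ∈ B, (g i - μ)^2 := by
      rw [Finset.sum_mul]
      refine Finset.sum_le_sum (fun i hi => ?_)
      have h2 := (Finset.mem_filter.1 hi).2
      nlinarith [abs_nonneg (g i - μ), sq_abs (g i - μ)]
    have key : (∑ i ∈ B, |g i - μ|) * (ε*μ) ≤ (3*ε^2*m*μ) * (ε*μ) := by
      calc (∑ i ∈ B, |g i - μ|) * (ε*μ) ≤ ∑ i ∈ B, (g i - μ)^2 := h1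
        _ ≤ 3 * γ * m * μ^2 := hVarB
        _ = (3*ε^2*m*μ) * (ε*μ) := by rw [← hε3]; ring
    exact le_of_mul_le_mul_right key (by positivity)
  have hBg : ∑ i ∈ B, g i ≤ 6 * ε * m * μ := by
    have h1 : ∑ i ∈ B, g i ≤ ∑ i ∈ B, (|g i - μ| + μ) :=
      Finset.sum_le_sum (fun i _ => by
        cases abs_cases (g i - μ) with
        | inl h => linarith [h.1]
        | inr h => linarith [h.1])
    rw [Finset.sum_add_distrib, Finset.sum_const, nsmul_eq_mul] at h1
    have h2 : (B.card : ℝ) * μ ≤ 3 * ε * m * μ := mul_le_mul_of_nonneg_right hBcard hμ.le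
    have h3 : ε^2 * m * μ ≤ ε * m * μ := by
      nlinarith [mul_nonneg (mul_nonneg hε0.le (sub_nonneg.2 hε1.le)) (mul_pos hm0 hμ).le]
    linarith
  have hBh : ∑ i ∈ B, (if 0 < g i then f i / g i else 0) ≤ 3 * ε * m := by
    calc ∑ i ∈ B, (if 0 < g i then f i / g i else 0) ≤ ∑ i ∈ B, (1:ℝ) :=
          Finset.sum_le_sum (fun i hi => (hh01 i (hBs hi)).2)
      _ = (B.card : ℝ) := by simp
      _ ≤ 3 * ε * m := hBcard
  have hBh0 : 0 ≤ ∑ i ∈ B, (if 0 < g i then f i / g i else 0) :=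
    Finset.sum_nonneg (fun i hi => (hh01 i (hBs hi)).1)
  have hBf0 : 0 ≤ ∑ i ∈ B, f i := Finset.sum_nonneg (fun i hi => hf0 i (hBs hi))
  have hBf : ∑ i ∈ B, f i ≤ 6 * ε * m * μ :=
    le_trans (Finset.sum_le_sum (fun i hi => hfg i (hBs hi))) hBg
  -- good set pointwise bound
  have hGpt : ∀ i ∈ G, |(if 0 < g i then f i / g i else 0) - f i / μ| ≤ ε := by
    intro i hi
    have h2 : ¬ ε*μ < |g i - μ| := (Finset.mem_filter.1 hi).2
    push_neg at h2
    have habs := abs_le.1 h2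
    have hgpos : 0 < g i := by nlinarith [mul_pos hε0 hμ]
    rw [if_pos hgpos]
    have heq : f i / g i - f i / μ = f i * (μ - g i) / (g i * μ) := by
      field_simp [hgpos.ne', hμ.ne']
    rw [heq, abs_div, abs_mul, abs_of_pos (mul_pos hgpos hμ)]
    rw [div_le_iff₀ (mul_pos hgpos hμ)]
    have h3 : |f i| = f i := abs_of_nonneg (hf0 i (hGs hi))
    have h4 : |μ - g i| ≤ ε * μ := by
      rw [abs_sub_comm]; exact h2
    calc |f i| * |μ - g i| ≤ g i * (ε * μ) := by
          rw [h3]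
          exact mul_le_mul (hfg i (hGs hi)) h4 (abs_nonneg _) hgpos.le
      _ = ε * (g i * μ) := by ring
  have hGsum : |(∑ i ∈ G, (if 0 < g i then f i / g i else 0)) - ∑ i ∈ G, f i / μ| ≤ ε * m := by
    rw [← Finset.sum_sub_distrib]
    calc |∑ i ∈ G, ((if 0 < g i then f i / g i else 0) - f i / μ)|
        ≤ ∑ i ∈ G, |(if 0 < g i then f i / g i else 0) - f i / μ| :=
          Finset.abs_sum_le_sum_abs _ _
      _ ≤ ∑ i ∈ G, ε := Finset.sum_le_sum hGpt
      _ = (G.card : ℝ) * ε := by rw [Finset.sum_const, nsmul_eq_mul]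
      _ ≤ m * ε := by
          have : (G.card : ℝ) ≤ m := by
            rw [hm]; exact_mod_cast Finset.card_le_card hGs
          exact mul_le_mul_of_nonneg_right this hε0.le
      _ = ε * m := mul_comm _ _
  -- combine over s
  set T1 := ∑ i ∈ s, (if 0 < g i then f i / g i else 0) with hT1
  set T2 := ∑ i ∈ s, f i with hT2
  set Sg := ∑ i ∈ s, g i with hSg
  have hsplit1 : T1 = (∑ i ∈ B, (if 0 < g i then f i / g i else 0))
      + ∑ i ∈ G, (if 0 < g i then f i / g i else 0) := by
    rw [hT1, hBdef, hGdef]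
    exact (Finset.sum_filter_add_sum_filter_not s _ _).symm
  have hsplit2 : T2 = (∑ i ∈ B, f i) + ∑ i ∈ G, f i := by
    rw [hT2, hBdef, hGdef]
    exact (Finset.sum_filter_add_sum_filter_not s _ _).symm
  have hmain : |T1 - T2 / μ| ≤ 10 * ε * m := by
    have hGf : ∑ i ∈ G, f i / μ = (∑ i ∈ G, f i) / μ := by
      rw [Finset.sum_div]
    have hBfμ : (∑ i ∈ B, f i) / μ ≤ 6 * ε * m := by
      rw [div_le_iff₀ hμ]
      nlinarith
    have hBfμ0 : 0 ≤ (∑ i ∈ B, f i) / μ := div_nonneg hBf0 hμ.le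
    have habs := abs_le.1 hGsum
    rw [hGf] at habs
    rw [hsplit1, hsplit2, abs_le]
    constructor
    · rw [add_div]
      linarith [habs.1]
    · rw [add_div]
      linarith [habs.2]
  have step1 : |T1 / m - T2 / (m * μ)| ≤ 10 * ε := by
    have heq : T1 / m - T2 / (m * μ) = (T1 - T2 / μ) / m := by
      field_simp [hm0.ne', hμ.ne']
    rw [heq, abs_div, abs_of_pos hm0, div_le_iff₀ hm0]
    linarith [hmain]
  have step2 : |T2 / (m * μ) - T2 / Sg| ≤ ε := by
    have hSgpos : 0 < Sg := hSg0
    have heq : T2 / (m * μ) - T2 / Sg = T2 * (Sg - m * μ) / ((m * μ) * Sg) := by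
      field_simp [hm0.ne', hμ.ne', hSgpos.ne']
    rw [heq, abs_div, abs_mul, abs_of_pos (mul_pos (mul_pos hm0 hμ) hSgpos)]
    rw [div_le_iff₀ (mul_pos (mul_pos hm0 hμ) hSgpos)]
    have hT2abs : |T2| = T2 := abs_of_nonneg hSf0
    have hdev : |Sg - m * μ| ≤ γ * (m * μ) := by
      rw [abs_le]
      constructor <;> nlinarith [hAl, hAu]
    calc |T2| * |Sg - m * μ| ≤ Sg * (γ * (m * μ)) := by
          rw [hT2abs]
          exact mul_le_mul hSfg hdev (abs_nonneg _) hSgpos.le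
      _ = γ * (m * μ * Sg) := by ring
      _ ≤ ε * (m * μ * Sg) := by
          exact mul_le_mul_of_nonneg_right hγε (by positivity)
  calc |T1 / m - T2 / Sg|
      ≤ |T1 / m - T2 / (m * μ)| + |T2 / (m * μ) - T2 / Sg| := abs_sub_le _ _ _
    _ ≤ 10 * ε + ε := add_le_add step1 step2
    _ ≤ 20 * ε := by linarith [hε0]

lemma ind_nonneg {N : ℕ} (D : Finset (Fin N × Fin N × Fin N)) (x y z : Fin N) :
    0 ≤ ind D x y z := by
  unfold ind; split <;> norm_num

lemma ind_le_one {N : ℕ} (D : Finset (Fin N × Fin N × Fin N)) (x y z : Fin N) :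
    ind D x y z ≤ 1 := by
  unfold ind; split <;> norm_num

lemma ind_mono {N : ℕ} {T D : Finset (Fin N × Fin N × Fin N)} (hTD : T ⊆ D) (x y z : Fin N) :
    ind T x y z ≤ ind D x y z := by
  unfold ind
  by_cases h : (x, y, z) ∈ T
  · simp [h, hTD h]
  · simp only [h, if_false]
    split <;> norm_num

lemma count_eq {N : ℕ} (D : Finset (Fin N × Fin N × Fin N)) (X Y Z : Finset (Fin N)) :
    ((D.filter fun p => p.1 ∈ X ∧ p.2.1 ∈ Y ∧ p.2.2 ∈ Z).card : ℝ) =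
      ∑ x ∈ X, ∑ y ∈ Y, ∑ z ∈ Z, ind D x y z := by
  classical
  have h1 : (D.filter fun p => p.1 ∈ X ∧ p.2.1 ∈ Y ∧ p.2.2 ∈ Z) =
      ((X ×ˢ Y ×ˢ Z).filter (fun p => p ∈ D)) := by
    ext p
    simp only [Finset.mem_filter, Finset.mem_product]
    tauto
  rw [h1, Finset.card_filter]
  push_cast
  rw [Finset.sum_product]
  refine Finset.sum_congr rfl fun x _ => ?_
  rw [Finset.sum_product]
  refine Finset.sum_congr rfl fun y _ => ?_
  refine Finset.sum_congr rfl fun z _ => ?_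
  simp [ind]

lemma div_div_div_same (a b c : ℝ) (hc : c ≠ 0) : (a / c) / (b / c) = a / b := by
  rcases eq_or_ne b 0 with h | h
  · simp [h]
  · field_simp

/-- the average of `h(x,y) = E_z T(x,y,z) / E_z D(x,y,z)` over a
cube with respect to which `D` is pseudorandom is close to `|T ∩ C| / |D ∩ C|`. -/
theorem approx_h :
    ∃ C₀ : ℝ, 0 < C₀ ∧
      ∀ (N : ℕ) (γ : ℝ) (D T : Finset (Fin N × Fin N × Fin N))
        (X Y Z : Finset (Fin N)),
        0 < N → 0 < γ → γ < 1 →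
        D.Nonempty → X.Nonempty → Y.Nonempty → Z.Nonempty →
        PseudorandomCube D γ X Y Z →
        T ⊆ D →
        |(∑ x ∈ X, ∑ y ∈ Y,
              (if 0 < (∑ z ∈ Z, ind D x y z) / (Z.card : ℝ) then
                ((∑ z ∈ Z, ind T x y z) / (Z.card : ℝ)) /
                  ((∑ z ∈ Z, ind D x y z) / (Z.card : ℝ))
              else 0)) / ((X.card : ℝ) * Y.card) -
            ((T.filter fun p => p.1 ∈ X ∧ p.2.1 ∈ Y ∧ p.2.2 ∈ Z).card : ℝ) /
              ((D.filter fun p => p.1 ∈ X ∧ p.2.1 ∈ Y ∧ p.2.2 ∈ Z).card : ℝ)| ≤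
          C₀ * γ ^ ((1 : ℝ) / 3) := by
  refine ⟨20, by norm_num, ?_⟩
  intro N γ D T X Y Z hN hγ0 hγ1 hD hX hY hZ hPR hTD
  have hX0 : (0 : ℝ) < X.card := by exact_mod_cast Finset.card_pos.2 hX
  have hY0 : (0 : ℝ) < Y.card := by exact_mod_cast Finset.card_pos.2 hY
  have hZ0 : (0 : ℝ) < Z.card := by exact_mod_cast Finset.card_pos.2 hZ
  have hμ : 0 < density D := by
    unfold density
    have h1 : (0 : ℝ) < D.card := by exact_mod_cast Finset.card_pos.2 hD
    have h2 : (0 : ℝ) < (N : ℝ) ^ 3 := by positivity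
    exact div_pos h1 h2
  set f : Fin N × Fin N → ℝ := fun p => (∑ z ∈ Z, ind T p.1 p.2 z) / (Z.card : ℝ) with hf
  set g : Fin N × Fin N → ℝ := fun p => (∑ z ∈ Z, ind D p.1 p.2 z) / (Z.card : ℝ) with hg
  have hs : (X ×ˢ Y).Nonempty := hX.product hY
  have hf0 : ∀ p ∈ X ×ˢ Y, 0 ≤ f p := fun p _ =>
    div_nonneg (Finset.sum_nonneg fun z _ => ind_nonneg T _ _ z) hZ0.le
  have hfg : ∀ p ∈ X ×ˢ Y, f p ≤ g p := fun p _ =>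
    div_le_div_of_nonneg_right (Finset.sum_le_sum fun z _ => ind_mono hTD _ _ z) hZ0.le
  have hg1 : ∀ p ∈ X ×ˢ Y, g p ≤ 1 := by
    intro p _
    rw [hg, div_le_one hZ0]
    calc ∑ z ∈ Z, ind D p.1 p.2 z ≤ ∑ z ∈ Z, (1 : ℝ) :=
          Finset.sum_le_sum fun z _ => ind_le_one D _ _ z
      _ = (Z.card : ℝ) := by simp
  -- sum identities
  have hgsum : ∑ p ∈ X ×ˢ Y, g p = (((X ×ˢ Y).card : ℝ)) * avg1 D X Y Z := by
    rw [Finset.sum_product]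
    simp only [hg]
    rw [avg1]
    push_cast [Finset.card_product]
    simp only [← Finset.sum_div]
    field_simp
  have hg2sum : ∑ p ∈ X ×ˢ Y, g p ^ 2 = (((X ×ˢ Y).card : ℝ)) * avg2Z D X Y Z := by
    rw [Finset.sum_product]
    simp only [hg]
    rw [avg2Z]
    push_cast [Finset.card_product]
    have : ∀ x ∈ X, ∀ y ∈ Y, ((∑ z ∈ Z, ind D x y z) / (Z.card : ℝ)) ^ 2
        = (∑ z ∈ Z, ∑ z' ∈ Z, ind D x y z * ind D x y z') / ((Z.card : ℝ) * Z.card) := by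
      intro x _ y _
      rw [← Finset.sum_mul_sum]
      field_simp
    rw [Finset.sum_congr rfl fun x hx => Finset.sum_congr rfl fun y hy => this x hx y hy]
    simp only [← Finset.sum_div]
    field_simp
  have hcard0 : (0 : ℝ) ≤ ((X ×ˢ Y).card : ℝ) := by positivity
  have hAl : ((X ×ˢ Y).card : ℝ) * density D * (1 - γ) ≤ ∑ p ∈ X ×ˢ Y, g p := by
    rw [hgsum, mul_assoc]
    exact mul_le_mul_of_nonneg_left hPR.1.1 hcard0
  have hAu : ∑ p ∈ X ×ˢ Y, g p ≤ ((X ×ˢ Y).card : ℝ) * density D * (1 + γ) := by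
    rw [hgsum, mul_assoc]
    exact mul_le_mul_of_nonneg_left hPR.1.2 hcard0
  have hBu : ∑ p ∈ X ×ˢ Y, g p ^ 2 ≤ ((X ×ˢ Y).card : ℝ) * density D ^ 2 * (1 + γ) := by
    rw [hg2sum, mul_assoc]
    exact mul_le_mul_of_nonneg_left hPR.2.1.2 hcard0
  have key := core (X ×ˢ Y) hs f g (density D) γ hμ hγ0 hγ1 hf0 hfg hg1 hAl hAu hBu
  -- rewrite key into the goal shape
  have e1 : (∑ p ∈ X ×ˢ Y, (if 0 < g p then f p / g p else 0)) / ((X ×ˢ Y).card : ℝ)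
      = (∑ x ∈ X, ∑ y ∈ Y,
          (if 0 < (∑ z ∈ Z, ind D x y z) / (Z.card : ℝ) then
            ((∑ z ∈ Z, ind T x y z) / (Z.card : ℝ)) /
              ((∑ z ∈ Z, ind D x y z) / (Z.card : ℝ))
          else 0)) / ((X.card : ℝ) * Y.card) := by
    rw [Finset.sum_product]
    push_cast [Finset.card_product]
    simp only [hf, hg]
  have e2 : (∑ p ∈ X ×ˢ Y, f p) / (∑ p ∈ X ×ˢ Y, g p)
      = ((T.filter fun p => p.1 ∈ X ∧ p.2.1 ∈ Y ∧ p.2.2 ∈ Z).card : ℝ) /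
        ((D.filter fun p => p.1 ∈ X ∧ p.2.1 ∈ Y ∧ p.2.2 ∈ Z).card : ℝ) := by
    rw [Finset.sum_product, Finset.sum_product]
    simp only [hf, hg, ← Finset.sum_div]
    rw [← count_eq T X Y Z, ← count_eq D X Y Z]
    exact div_div_div_same _ _ _ hZ0.ne'
  rw [e1, e2] at key
  exact key
end

section
/- There exists an absolute constant c > 0 with the following property. Let Col : [N]×[N] → [M] be an (N,M,η)-expander coloring, let γ ∈ (0,1), and assume η ≤ c·γ³·M^{−5}. Then the set D(Col) = {(x,y,z) ∈ [N]³ : Col(x,y) = Col(x,z) = Col(y,z)} is γ-pseudorandom with respect to large cubes. -/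
open Finset

/-- `Col : [N]×[N] → [M]` is an `(N,M,η)`-expander coloring. -/
def IsExpanderColoring (N M : ℕ) (η : ℝ) (Col : Fin N → Fin N → Fin M) : Prop :=
  ∀ X Y : Finset (Fin N), η * N ≤ (X.card : ℝ) → η * N ≤ (Y.card : ℝ) →
    ∀ m : Fin M,
      Approx (((X ×ˢ Y).filter fun p => Col p.1 p.2 = m).card : ℝ)
        ((X.card : ℝ) * Y.card / M) η

namespace PfAux

variable {N M : ℕ}

/-- edge-color indicator -/
def ee (Col : Fin N → Fin N → Fin M) (m : Fin M) (x y : Fin N) : ℝ :=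
  if Col x y = m then 1 else 0

lemma ee_nonneg (Col : Fin N → Fin N → Fin M) (m : Fin M) (x y : Fin N) :
    0 ≤ ee Col m x y := by unfold ee; split <;> norm_num

lemma ee_le_one (Col : Fin N → Fin N → Fin M) (m : Fin M) (x y : Fin N) :
    ee Col m x y ≤ 1 := by unfold ee; split <;> norm_num

lemma sum_close {ι : Type*} (I : Finset ι) (f g : ι → ℝ) (e : ℝ)
    (h : ∀ i ∈ I, |f i - g i| ≤ e) :
    |(∑ i ∈ I, f i) - ∑ i ∈ I, g i| ≤ I.card * e := by
  rw [← Finset.sum_sub_distrib]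
  calc |∑ i ∈ I, (f i - g i)| ≤ ∑ i ∈ I, |f i - g i| := Finset.abs_sum_le_sum_abs _ _
    _ ≤ ∑ i ∈ I, e := Finset.sum_le_sum h
    _ = I.card * e := by rw [Finset.sum_const, nsmul_eq_mul]

lemma card_le_N (A : Finset (Fin N)) : (A.card : ℝ) ≤ N := by
  have h := Finset.card_le_univ A
  simp only [Finset.card_univ, Fintype.card_fin] at h
  exact_mod_cast h

lemma card_filter_eq_sum (A : Finset (Fin N)) (p : Fin N → Prop) [DecidablePred p] :
    ((A.filter p).card : ℝ) = ∑ x ∈ A, if p x then (1:ℝ) else 0 := by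
  rw [Finset.card_filter]; push_cast; rfl

/-- the key uniform pair-count bound -/
lemma pair_bound (Col : Fin N → Fin N → Fin M) (η : ℝ)
    (hM : 0 < M) (hη : 0 ≤ η) (hexp : IsExpanderColoring N M η Col)
    (A B : Finset (Fin N)) (m : Fin M) :
    |(∑ a ∈ A, ∑ b ∈ B, ee Col m a b) - A.card * B.card / M| ≤ 2 * η * N ^ 2 := by
  have hA : (A.card : ℝ) ≤ N := card_le_N A
  have hB : (B.card : ℝ) ≤ N := card_le_N B
  have hA0 : (0:ℝ) ≤ A.card := by positivity
  have hB0 : (0:ℝ) ≤ B.card := by positivity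
  have hM1 : (1:ℝ) ≤ M := by exact_mod_cast hM
  have hcnt : (((A ×ˢ B).filter fun p => Col p.1 p.2 = m).card : ℝ)
      = ∑ a ∈ A, ∑ b ∈ B, ee Col m a b := by
    rw [Finset.card_filter]; push_cast; rw [Finset.sum_product]; rfl
  have hSnn : 0 ≤ ∑ a ∈ A, ∑ b ∈ B, ee Col m a b := by
    apply Finset.sum_nonneg; intro a _; apply Finset.sum_nonneg; intro b _
    exact ee_nonneg _ _ _ _
  have hSle : (∑ a ∈ A, ∑ b ∈ B, ee Col m a b) ≤ A.card * B.card := by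
    calc (∑ a ∈ A, ∑ b ∈ B, ee Col m a b) ≤ ∑ a ∈ A, ∑ b ∈ B, (1:ℝ) := by
          apply Finset.sum_le_sum; intro a _; apply Finset.sum_le_sum; intro b _
          exact ee_le_one _ _ _ _
      _ = A.card * B.card := by simp [mul_comm]
  have hdiv : (A.card : ℝ) * B.card / M ≤ A.card * B.card :=
    div_le_self (by positivity) hM1
  by_cases hc : η * N ≤ (A.card : ℝ) ∧ η * N ≤ (B.card : ℝ)
  · obtain ⟨h1, h2⟩ := hexp A B hc.1 hc.2 m
    rw [hcnt] at h1 h2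
    have hb : (A.card : ℝ) * B.card / M ≤ N ^ 2 := by
      calc (A.card : ℝ) * B.card / M ≤ A.card * B.card := hdiv
        _ ≤ N * N := by nlinarith
        _ = N ^ 2 := by ring
    rw [abs_le]; constructor <;> nlinarith
  · push_neg at hc
    have key : (A.card : ℝ) * B.card ≤ η * N * N := by
      by_cases h : η * N ≤ (A.card : ℝ)
      · have := hc h
        nlinarith
      · push_neg at h
        nlinarith
    have hdiv0 : (0:ℝ) ≤ A.card * B.card / M := by positivity
    have hNN : (0:ℝ) ≤ η * N ^ 2 := by positivity
    have hNN2 : η * (N:ℝ) * N = η * N ^ 2 := by ring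
    rw [abs_le]; constructor <;> nlinarith

lemma path_bound (η : ℝ) (hη : 0 ≤ η) (hM : 0 < M)
    (u v : Fin N → Fin N → Fin M)
    (hu : ∀ (A C : Finset (Fin N)) (m : Fin M),
      |(∑ a ∈ A, ∑ c ∈ C, ee u m a c) - A.card * C.card / M| ≤ 2 * η * N ^ 2)
    (hv : ∀ (B C : Finset (Fin N)) (m : Fin M),
      |(∑ b ∈ B, ∑ c ∈ C, ee v m b c) - B.card * C.card / M| ≤ 2 * η * N ^ 2)
    (A B C : Finset (Fin N)) (m : Fin M) :
    |(∑ c ∈ C, (∑ a ∈ A, ee u m a c) * (∑ b ∈ B, ee v m b c))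
      - A.card * B.card * C.card / M ^ 2| ≤ 4 * η * N ^ 3 := by
  have hM1 : (1:ℝ) ≤ M := by exact_mod_cast hM
  have hMpos : (0:ℝ) < M := by exact_mod_cast hM
  have hA : (A.card : ℝ) ≤ N := card_le_N A
  have hB : (B.card : ℝ) ≤ N := card_le_N B
  have hB0 : (0:ℝ) ≤ B.card := by positivity
  have hN0 : (0:ℝ) ≤ N := by positivity
  have herr0 : (0:ℝ) ≤ 2 * η * N ^ 2 := by positivity
  have key : (∑ c ∈ C, (∑ a ∈ A, ee u m a c) * (∑ b ∈ B, ee v m b c))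
      = ∑ a ∈ A, ∑ c ∈ C.filter (fun c => u a c = m), (∑ b ∈ B, ee v m b c) := by
    have h1 : (∑ c ∈ C, (∑ a ∈ A, ee u m a c) * (∑ b ∈ B, ee v m b c))
        = ∑ a ∈ A, ∑ c ∈ C, ee u m a c * (∑ b ∈ B, ee v m b c) := by
      rw [Finset.sum_comm]
      exact Finset.sum_congr rfl fun c _ => Finset.sum_mul _ _ _
    rw [h1]
    apply Finset.sum_congr rfl; intro a _
    rw [Finset.sum_filter]
    apply Finset.sum_congr rfl; intro c _
    unfold ee; split <;> simp
  rw [key]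
  set Q : ℝ := ∑ a ∈ A, ((C.filter (fun c => u a c = m)).card : ℝ) with hQdef
  have hQ : |Q - A.card * C.card / M| ≤ 2 * η * N ^ 2 := by
    have : Q = ∑ a ∈ A, ∑ c ∈ C, ee u m a c := by
      apply Finset.sum_congr rfl; intro a _
      rw [card_filter_eq_sum]; rfl
    rw [this]; exact hu A C m
  have h3 : |(∑ a ∈ A, ∑ c ∈ C.filter (fun c => u a c = m), (∑ b ∈ B, ee v m b c))
      - (B.card / M) * Q| ≤ A.card * (2 * η * N ^ 2) := by
    have := sum_close A
      (fun a => ∑ c ∈ C.filter (fun c => u a c = m), (∑ b ∈ B, ee v m b c))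
      (fun a => B.card * ((C.filter (fun c => u a c = m)).card : ℝ) / M)
      (2 * η * N ^ 2) ?_
    · have heq : (∑ a ∈ A, B.card * ((C.filter (fun c => u a c = m)).card : ℝ) / M)
          = (B.card / M) * Q := by
        rw [hQdef, Finset.mul_sum]
        apply Finset.sum_congr rfl; intro a _; ring
      rw [heq] at this; exact this
    · intro a _
      have h := hv B (C.filter (fun c => u a c = m)) m
      rw [Finset.sum_comm] at h
      simpa using h
  calc |(∑ a ∈ A, ∑ c ∈ C.filter (fun c => u a c = m), (∑ b ∈ B, ee v m b c))
        - A.card * B.card * C.card / M ^ 2|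
      ≤ |(∑ a ∈ A, ∑ c ∈ C.filter (fun c => u a c = m), (∑ b ∈ B, ee v m b c))
        - (B.card / M) * Q| + |(B.card / M) * Q - A.card * B.card * C.card / M ^ 2| :=
        abs_sub_le _ _ _
    _ ≤ A.card * (2 * η * N ^ 2) + (B.card / M) * (2 * η * N ^ 2) := by
        refine add_le_add h3 ?_
        have : (B.card / M) * Q - A.card * B.card * C.card / M ^ 2
            = (B.card / M) * (Q - A.card * C.card / M) := by
          field_simp
        rw [this, abs_mul, abs_of_nonneg (by positivity : (0:ℝ) ≤ (B.card:ℝ) / M)]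
        exact mul_le_mul_of_nonneg_left hQ (by positivity)
    _ ≤ 4 * η * N ^ 3 := by
        have hBM : (B.card : ℝ) / M ≤ N := by
          calc (B.card : ℝ) / M ≤ B.card / 1 := by
                apply div_le_div_of_nonneg_left hB0 one_pos hM1
            _ = B.card := by ring
            _ ≤ N := hB
        nlinarith [mul_le_mul_of_nonneg_right hA herr0, mul_le_mul_of_nonneg_right hBM herr0]

lemma tri_bound (η : ℝ) (hη : 0 ≤ η) (hM : 0 < M)
    (u v w : Fin N → Fin N → Fin M)
    (hu : ∀ (A C : Finset (Fin N)) (m : Fin M),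
      |(∑ a ∈ A, ∑ c ∈ C, ee u m a c) - A.card * C.card / M| ≤ 2 * η * N ^ 2)
    (hv : ∀ (B C : Finset (Fin N)) (m : Fin M),
      |(∑ b ∈ B, ∑ c ∈ C, ee v m b c) - B.card * C.card / M| ≤ 2 * η * N ^ 2)
    (hw : ∀ (A B : Finset (Fin N)) (m : Fin M),
      |(∑ a ∈ A, ∑ b ∈ B, ee w m a b) - A.card * B.card / M| ≤ 2 * η * N ^ 2)
    (A B C : Finset (Fin N)) (m : Fin M) :
    |(∑ c ∈ C, ∑ a ∈ A.filter (fun a => u a c = m), ∑ b ∈ B.filter (fun b => v b c = m),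
        ee w m a b) - A.card * B.card * C.card / M ^ 3| ≤ 6 * η * N ^ 3 := by
  have hM1 : (1:ℝ) ≤ M := by exact_mod_cast hM
  have hMpos : (0:ℝ) < M := by exact_mod_cast hM
  have hC : (C.card : ℝ) ≤ N := card_le_N C
  have hN0 : (0:ℝ) ≤ N := by positivity
  have herr0 : (0:ℝ) ≤ 2 * η * N ^ 2 := by positivity
  set P : ℝ := ∑ c ∈ C, ((A.filter (fun a => u a c = m)).card : ℝ)
      * ((B.filter (fun b => v b c = m)).card : ℝ) with hPdef
  have h1 : |(∑ c ∈ C, ∑ a ∈ A.filter (fun a => u a c = m),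
        ∑ b ∈ B.filter (fun b => v b c = m), ee w m a b) - P / M| ≤ C.card * (2 * η * N ^ 2) := by
    have := sum_close C
      (fun c => ∑ a ∈ A.filter (fun a => u a c = m), ∑ b ∈ B.filter (fun b => v b c = m),
        ee w m a b)
      (fun c => ((A.filter (fun a => u a c = m)).card : ℝ)
        * ((B.filter (fun b => v b c = m)).card : ℝ) / M)
      (2 * η * N ^ 2) (fun c _ => hw _ _ m)
    have heq : (∑ c ∈ C, ((A.filter (fun a => u a c = m)).card : ℝ)
        * ((B.filter (fun b => v b c = m)).card : ℝ) / M) = P / M := by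
      rw [hPdef, Finset.sum_div]
    rw [heq] at this; exact this
  have h2 : |P - A.card * B.card * C.card / M ^ 2| ≤ 4 * η * N ^ 3 := by
    have heq : P = ∑ c ∈ C, (∑ a ∈ A, ee u m a c) * (∑ b ∈ B, ee v m b c) := by
      apply Finset.sum_congr rfl; intro c _
      rw [card_filter_eq_sum, card_filter_eq_sum]; rfl
    rw [heq]; exact path_bound η hη hM u v hu hv A B C m
  calc |(∑ c ∈ C, ∑ a ∈ A.filter (fun a => u a c = m),
        ∑ b ∈ B.filter (fun b => v b c = m), ee w m a b) - A.card * B.card * C.card / M ^ 3|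
      ≤ |(∑ c ∈ C, ∑ a ∈ A.filter (fun a => u a c = m),
          ∑ b ∈ B.filter (fun b => v b c = m), ee w m a b) - P / M|
        + |P / M - A.card * B.card * C.card / M ^ 3| := abs_sub_le _ _ _
    _ ≤ C.card * (2 * η * N ^ 2) + (1 / M) * (4 * η * N ^ 3) := by
        refine add_le_add h1 ?_
        have heq : P / M - A.card * B.card * C.card / M ^ 3
            = (1 / M) * (P - A.card * B.card * C.card / M ^ 2) := by
          field_simp
        rw [heq, abs_mul, abs_of_nonneg (by positivity : (0:ℝ) ≤ 1 / (M:ℝ))]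
        exact mul_le_mul_of_nonneg_left h2 (by positivity)
    _ ≤ 6 * η * N ^ 3 := by
        have hM1' : (1:ℝ) / M ≤ 1 := by
          rw [div_le_one hMpos]; exact hM1
        have h3 : (0:ℝ) ≤ 4 * η * N ^ 3 := by positivity
        nlinarith [mul_le_mul_of_nonneg_right hC herr0]

lemma k5_bound (η : ℝ) (hη : 0 ≤ η) (hM : 0 < M)
    (u v w : Fin N → Fin N → Fin M)
    (hu : ∀ (A C : Finset (Fin N)) (m : Fin M),
      |(∑ a ∈ A, ∑ c ∈ C, ee u m a c) - A.card * C.card / M| ≤ 2 * η * N ^ 2)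
    (hv : ∀ (B C : Finset (Fin N)) (m : Fin M),
      |(∑ b ∈ B, ∑ c ∈ C, ee v m b c) - B.card * C.card / M| ≤ 2 * η * N ^ 2)
    (hw : ∀ (A B : Finset (Fin N)) (m : Fin M),
      |(∑ a ∈ A, ∑ b ∈ B, ee w m a b) - A.card * B.card / M| ≤ 2 * η * N ^ 2)
    (A B C : Finset (Fin N)) (m : Fin M) :
    |(∑ c ∈ C, ∑ c' ∈ C,
        ∑ a ∈ A.filter (fun a => u a c = m ∧ u a c' = m),
        ∑ b ∈ B.filter (fun b => v b c = m ∧ v b c' = m), ee w m a b)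
      - A.card * B.card * C.card ^ 2 / M ^ 5| ≤ 10 * η * N ^ 4 := by
  have hM1 : (1:ℝ) ≤ M := by exact_mod_cast hM
  have hMpos : (0:ℝ) < M := by exact_mod_cast hM
  have hC : (C.card : ℝ) ≤ N := card_le_N C
  have hC0 : (0:ℝ) ≤ C.card := by positivity
  have hN0 : (0:ℝ) ≤ N := by positivity
  have herr0 : (0:ℝ) ≤ 2 * η * N ^ 2 := by positivity
  set C4 : ℝ := ∑ c ∈ C, ∑ c' ∈ C,
      ((A.filter (fun a => u a c = m ∧ u a c' = m)).card : ℝ)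
      * ((B.filter (fun b => v b c = m ∧ v b c' = m)).card : ℝ) with hC4def
  have h1 : |(∑ c ∈ C, ∑ c' ∈ C,
        ∑ a ∈ A.filter (fun a => u a c = m ∧ u a c' = m),
        ∑ b ∈ B.filter (fun b => v b c = m ∧ v b c' = m), ee w m a b) - C4 / M|
      ≤ C.card * (C.card * (2 * η * N ^ 2)) := by
    have := sum_close C
      (fun c => ∑ c' ∈ C, ∑ a ∈ A.filter (fun a => u a c = m ∧ u a c' = m),
        ∑ b ∈ B.filter (fun b => v b c = m ∧ v b c' = m), ee w m a b)
      (fun c => ∑ c' ∈ C, ((A.filter (fun a => u a c = m ∧ u a c' = m)).card : ℝ)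
        * ((B.filter (fun b => v b c = m ∧ v b c' = m)).card : ℝ) / M)
      (C.card * (2 * η * N ^ 2)) ?_
    · have heq : (∑ c ∈ C, ∑ c' ∈ C,
          ((A.filter (fun a => u a c = m ∧ u a c' = m)).card : ℝ)
          * ((B.filter (fun b => v b c = m ∧ v b c' = m)).card : ℝ) / M) = C4 / M := by
        rw [hC4def, Finset.sum_div]
        exact Finset.sum_congr rfl fun c _ => (Finset.sum_div _ _ _).symm
      rw [heq] at this; exact this
    · intro c _
      exact sum_close C _ _ _ (fun c' _ => hw _ _ m)
  set P : ℝ := ∑ c ∈ C, ((A.filter (fun a => u a c = m)).card : ℝ)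
      * ((B.filter (fun b => v b c = m)).card : ℝ) with hPdef
  have h2 : |C4 - (C.card / M ^ 2) * P| ≤ C.card * (4 * η * N ^ 3) := by
    have := sum_close C
      (fun c => ∑ c' ∈ C,
        ((A.filter (fun a => u a c = m ∧ u a c' = m)).card : ℝ)
        * ((B.filter (fun b => v b c = m ∧ v b c' = m)).card : ℝ))
      (fun c => ((A.filter (fun a => u a c = m)).card : ℝ)
        * ((B.filter (fun b => v b c = m)).card : ℝ) * C.card / M ^ 2)
      (4 * η * N ^ 3) ?_
    · have heq : (∑ c ∈ C, ((A.filter (fun a => u a c = m)).card : ℝ)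
          * ((B.filter (fun b => v b c = m)).card : ℝ) * C.card / M ^ 2)
          = (C.card / M ^ 2) * P := by
        rw [hPdef, Finset.mul_sum]
        apply Finset.sum_congr rfl; intro c _; ring
      rw [heq] at this; exact this
    · intro c _
      have key : (∑ c' ∈ C,
          ((A.filter (fun a => u a c = m ∧ u a c' = m)).card : ℝ)
          * ((B.filter (fun b => v b c = m ∧ v b c' = m)).card : ℝ))
          = ∑ c' ∈ C, (∑ a ∈ A.filter (fun a => u a c = m), ee u m a c')
            * (∑ b ∈ B.filter (fun b => v b c = m), ee v m b c') := by
        apply Finset.sum_congr rfl; intro c' _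
        congr 1
        · rw [← Finset.filter_filter, card_filter_eq_sum]; rfl
        · rw [← Finset.filter_filter, card_filter_eq_sum]; rfl
      rw [key]
      have hpb := path_bound η hη hM u v hu hv
        (A.filter (fun a => u a c = m)) (B.filter (fun b => v b c = m)) C m
      convert hpb using 3
  have h3 : |P - A.card * B.card * C.card / M ^ 2| ≤ 4 * η * N ^ 3 := by
    have heq : P = ∑ c ∈ C, (∑ a ∈ A, ee u m a c) * (∑ b ∈ B, ee v m b c) := by
      apply Finset.sum_congr rfl; intro c _
      rw [card_filter_eq_sum, card_filter_eq_sum]; rfl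
    rw [heq]; exact path_bound η hη hM u v hu hv A B C m
  have hCM2 : (C.card : ℝ) / M ^ 2 ≤ N := by
    calc (C.card : ℝ) / M ^ 2 ≤ C.card / 1 := by
          apply div_le_div_of_nonneg_left hC0 one_pos (by nlinarith)
      _ = C.card := by ring
      _ ≤ N := hC
  have hC4close : |C4 - A.card * B.card * C.card ^ 2 / M ^ 4| ≤ 8 * η * N ^ 4 := by
    calc |C4 - A.card * B.card * C.card ^ 2 / M ^ 4|
        ≤ |C4 - (C.card / M ^ 2) * P|
          + |(C.card / M ^ 2) * P - A.card * B.card * C.card ^ 2 / M ^ 4| := abs_sub_le _ _ _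
      _ ≤ C.card * (4 * η * N ^ 3) + (C.card / M ^ 2) * (4 * η * N ^ 3) := by
          refine add_le_add h2 ?_
          have heq : (C.card / M ^ 2) * P - A.card * B.card * C.card ^ 2 / M ^ 4
              = (C.card / M ^ 2) * (P - A.card * B.card * C.card / M ^ 2) := by
            field_simp
          rw [heq, abs_mul, abs_of_nonneg (by positivity : (0:ℝ) ≤ (C.card:ℝ) / M ^ 2)]
          exact mul_le_mul_of_nonneg_left h3 (by positivity)
      _ ≤ 8 * η * N ^ 4 := by
          have e0 : (0:ℝ) ≤ 4 * η * N ^ 3 := by positivity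
          nlinarith [mul_le_mul_of_nonneg_right hC e0, mul_le_mul_of_nonneg_right hCM2 e0]
  calc |(∑ c ∈ C, ∑ c' ∈ C,
        ∑ a ∈ A.filter (fun a => u a c = m ∧ u a c' = m),
        ∑ b ∈ B.filter (fun b => v b c = m ∧ v b c' = m), ee w m a b)
      - A.card * B.card * C.card ^ 2 / M ^ 5|
      ≤ |(∑ c ∈ C, ∑ c' ∈ C,
          ∑ a ∈ A.filter (fun a => u a c = m ∧ u a c' = m),
          ∑ b ∈ B.filter (fun b => v b c = m ∧ v b c' = m), ee w m a b) - C4 / M|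
        + |C4 / M - A.card * B.card * C.card ^ 2 / M ^ 5| := abs_sub_le _ _ _
    _ ≤ C.card * (C.card * (2 * η * N ^ 2)) + (1 / M) * (8 * η * N ^ 4) := by
        refine add_le_add h1 ?_
        have heq : C4 / M - A.card * B.card * C.card ^ 2 / M ^ 5
            = (1 / M) * (C4 - A.card * B.card * C.card ^ 2 / M ^ 4) := by
          field_simp
        rw [heq, abs_mul, abs_of_nonneg (by positivity : (0:ℝ) ≤ 1 / (M:ℝ))]
        exact mul_le_mul_of_nonneg_left hC4close (by positivity)
    _ ≤ 10 * η * N ^ 4 := by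
        have hM1' : (1:ℝ) / M ≤ 1 := by rw [div_le_one hMpos]; exact hM1
        have e0 : (0:ℝ) ≤ 8 * η * N ^ 4 := by positivity
        have hCC : (C.card : ℝ) * (C.card * (2 * η * N ^ 2)) ≤ 2 * η * N ^ 4 := by
          nlinarith [mul_le_mul_of_nonneg_right hC herr0]
        nlinarith

lemma sum_one_color {M : ℕ} (c : Fin M) (p : Fin M → Prop) [DecidablePred p]
    (h : ∀ m, p m ↔ c = m) : (∑ m : Fin M, if p m then (1:ℝ) else 0) = 1 := by
  simp only [h]
  simp

lemma sum_no_color {M : ℕ} (p : Fin M → Prop) [DecidablePred p]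
    (h : ∀ m, ¬ p m) : (∑ m : Fin M, if p m then (1:ℝ) else 0) = 0 := by
  simp [h]

lemma ind_sum3 (Col : Fin N → Fin N → Fin M) (x y z : Fin N) :
    ind (Finset.univ.filter fun p : Fin N × Fin N × Fin N =>
        Col p.1 p.2.1 = Col p.1 p.2.2 ∧ Col p.1 p.2.2 = Col p.2.1 p.2.2) x y z
    = ∑ m : Fin M, if (Col x z = m ∧ Col y z = m ∧ Col x y = m) then (1:ℝ) else 0 := by
  simp only [ind, Finset.mem_filter, Finset.mem_univ, true_and]
  by_cases h : Col x y = Col x z ∧ Col x z = Col y z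
  · rw [if_pos h, eq_comm]
    apply sum_one_color (Col x z)
    intro m; constructor
    · exact fun hh => hh.1
    · intro hm; exact ⟨hm, h.2 ▸ hm, h.1 ▸ hm⟩
  · rw [if_neg h, eq_comm]
    apply sum_no_color
    rintro m ⟨h1, h2, h3⟩
    exact h ⟨h3.trans h1.symm, h1.trans h2.symm⟩

lemma ind_mul_ind_zz (Col : Fin N → Fin N → Fin M) (x y z z' : Fin N) :
    ind (Finset.univ.filter fun p : Fin N × Fin N × Fin N =>
        Col p.1 p.2.1 = Col p.1 p.2.2 ∧ Col p.1 p.2.2 = Col p.2.1 p.2.2) x y z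
    * ind (Finset.univ.filter fun p : Fin N × Fin N × Fin N =>
        Col p.1 p.2.1 = Col p.1 p.2.2 ∧ Col p.1 p.2.2 = Col p.2.1 p.2.2) x y z'
    = ∑ m : Fin M, if ((Col x z = m ∧ Col x z' = m) ∧ (Col y z = m ∧ Col y z' = m)
        ∧ Col x y = m) then (1:ℝ) else 0 := by
  simp only [ind, Finset.mem_filter, Finset.mem_univ, true_and]
  by_cases h : (Col x y = Col x z ∧ Col x z = Col y z)
      ∧ (Col x y = Col x z' ∧ Col x z' = Col y z')
  · rw [if_pos h.1, if_pos h.2, one_mul, eq_comm]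
    apply sum_one_color (Col x y)
    intro m; constructor
    · exact fun hh => hh.2.2
    · intro hm
      exact ⟨⟨h.1.1 ▸ hm, h.2.1 ▸ hm⟩,
        ⟨(h.1.1.trans h.1.2) ▸ hm, (h.2.1.trans h.2.2) ▸ hm⟩, hm⟩
  · have hz : (if (Col x y = Col x z ∧ Col x z = Col y z) then (1:ℝ) else 0)
        * (if (Col x y = Col x z' ∧ Col x z' = Col y z') then (1:ℝ) else 0) = 0 := by
      rcases not_and_or.mp h with h' | h'
      · rw [if_neg h', zero_mul]
      · rw [if_neg h', mul_zero]
    rw [hz, eq_comm]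
    apply sum_no_color
    rintro m ⟨⟨h1, h1'⟩, ⟨h2, h2'⟩, h3⟩
    exact h ⟨⟨h3.trans h1.symm, h1.trans h2.symm⟩, ⟨h3.trans h1'.symm, h1'.trans h2'.symm⟩⟩

lemma ind_mul_ind_xx (Col : Fin N → Fin N → Fin M) (x x' y z : Fin N) :
    ind (Finset.univ.filter fun p : Fin N × Fin N × Fin N =>
        Col p.1 p.2.1 = Col p.1 p.2.2 ∧ Col p.1 p.2.2 = Col p.2.1 p.2.2) x y z
    * ind (Finset.univ.filter fun p : Fin N × Fin N × Fin N =>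
        Col p.1 p.2.1 = Col p.1 p.2.2 ∧ Col p.1 p.2.2 = Col p.2.1 p.2.2) x' y z
    = ∑ m : Fin M, if ((Col x y = m ∧ Col x' y = m) ∧ (Col x z = m ∧ Col x' z = m)
        ∧ Col y z = m) then (1:ℝ) else 0 := by
  simp only [ind, Finset.mem_filter, Finset.mem_univ, true_and]
  by_cases h : (Col x y = Col x z ∧ Col x z = Col y z)
      ∧ (Col x' y = Col x' z ∧ Col x' z = Col y z)
  · rw [if_pos h.1, if_pos h.2, one_mul, eq_comm]
    apply sum_one_color (Col y z)
    intro m; constructor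
    · exact fun hh => hh.2.2
    · intro hm
      exact ⟨⟨(h.1.1.trans h.1.2) ▸ hm, (h.2.1.trans h.2.2) ▸ hm⟩,
        ⟨h.1.2 ▸ hm, h.2.2 ▸ hm⟩, hm⟩
  · have hz : (if (Col x y = Col x z ∧ Col x z = Col y z) then (1:ℝ) else 0)
        * (if (Col x' y = Col x' z ∧ Col x' z = Col y z) then (1:ℝ) else 0) = 0 := by
      rcases not_and_or.mp h with h' | h'
      · rw [if_neg h', zero_mul]
      · rw [if_neg h', mul_zero]
    rw [hz, eq_comm]
    apply sum_no_color
    rintro m ⟨⟨h1, h1'⟩, ⟨h2, h2'⟩, h3⟩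
    exact h ⟨⟨h1.trans h2.symm, h2.trans h3.symm⟩, ⟨h1'.trans h2'.symm, h2'.trans h3.symm⟩⟩

lemma ind_mul_ind_yy (Col : Fin N → Fin N → Fin M) (x y y' z : Fin N) :
    ind (Finset.univ.filter fun p : Fin N × Fin N × Fin N =>
        Col p.1 p.2.1 = Col p.1 p.2.2 ∧ Col p.1 p.2.2 = Col p.2.1 p.2.2) x y z
    * ind (Finset.univ.filter fun p : Fin N × Fin N × Fin N =>
        Col p.1 p.2.1 = Col p.1 p.2.2 ∧ Col p.1 p.2.2 = Col p.2.1 p.2.2) x y' z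
    = ∑ m : Fin M, if ((Col x y = m ∧ Col x y' = m) ∧ (Col y z = m ∧ Col y' z = m)
        ∧ Col x z = m) then (1:ℝ) else 0 := by
  simp only [ind, Finset.mem_filter, Finset.mem_univ, true_and]
  by_cases h : (Col x y = Col x z ∧ Col x z = Col y z)
      ∧ (Col x y' = Col x z ∧ Col x z = Col y' z)
  · rw [if_pos h.1, if_pos h.2, one_mul, eq_comm]
    apply sum_one_color (Col x z)
    intro m; constructor
    · exact fun hh => hh.2.2
    · intro hm
      exact ⟨⟨h.1.1 ▸ hm, h.2.1 ▸ hm⟩, ⟨h.1.2 ▸ hm, h.2.2 ▸ hm⟩, hm⟩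
  · have hz : (if (Col x y = Col x z ∧ Col x z = Col y z) then (1:ℝ) else 0)
        * (if (Col x y' = Col x z ∧ Col x z = Col y' z) then (1:ℝ) else 0) = 0 := by
      rcases not_and_or.mp h with h' | h'
      · rw [if_neg h', zero_mul]
      · rw [if_neg h', mul_zero]
    rw [hz, eq_comm]
    apply sum_no_color
    rintro m ⟨⟨h1, h1'⟩, ⟨h2, h2'⟩, h3⟩
    exact h ⟨⟨h1.trans h3.symm, h3.trans h2.symm⟩, ⟨h1'.trans h3.symm, h3.trans h2'.symm⟩⟩

lemma comm3 {α β γ : Type*} (s : Finset α) (t : Finset β) (r : Finset γ)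
    (f : α → β → γ → ℝ) :
    ∑ a ∈ s, ∑ b ∈ t, ∑ c ∈ r, f a b c = ∑ c ∈ r, ∑ a ∈ s, ∑ b ∈ t, f a b c := by
  calc ∑ a ∈ s, ∑ b ∈ t, ∑ c ∈ r, f a b c
      = ∑ a ∈ s, ∑ c ∈ r, ∑ b ∈ t, f a b c :=
        Finset.sum_congr rfl fun a _ => Finset.sum_comm
    _ = ∑ c ∈ r, ∑ a ∈ s, ∑ b ∈ t, f a b c := Finset.sum_comm

lemma comm4 {α β γ δ : Type*} (s : Finset α) (t : Finset β) (r : Finset γ) (q : Finset δ)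
    (f : α → β → γ → δ → ℝ) :
    ∑ a ∈ s, ∑ b ∈ t, ∑ c ∈ r, ∑ d ∈ q, f a b c d
      = ∑ c ∈ r, ∑ d ∈ q, ∑ a ∈ s, ∑ b ∈ t, f a b c d := by
  calc ∑ a ∈ s, ∑ b ∈ t, ∑ c ∈ r, ∑ d ∈ q, f a b c d
      = ∑ c ∈ r, ∑ a ∈ s, ∑ b ∈ t, ∑ d ∈ q, f a b c d :=
        comm3 s t r (fun a b c => ∑ d ∈ q, f a b c d)
    _ = ∑ c ∈ r, ∑ d ∈ q, ∑ a ∈ s, ∑ b ∈ t, f a b c d :=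
        Finset.sum_congr rfl fun c _ => comm3 s t q (fun a b d => f a b c d)

lemma pull3 {α β γ : Type*} (s : Finset α) (t : Finset β) (r : Finset γ)
    (f : α → β → γ → Fin M → ℝ) :
    ∑ a ∈ s, ∑ b ∈ t, ∑ c ∈ r, ∑ m : Fin M, f a b c m
      = ∑ m : Fin M, ∑ a ∈ s, ∑ b ∈ t, ∑ c ∈ r, f a b c m := by
  calc ∑ a ∈ s, ∑ b ∈ t, ∑ c ∈ r, ∑ m : Fin M, f a b c m
      = ∑ a ∈ s, ∑ b ∈ t, ∑ m : Fin M, ∑ c ∈ r, f a b c m :=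
        Finset.sum_congr rfl fun a _ => Finset.sum_congr rfl fun b _ => Finset.sum_comm
    _ = ∑ a ∈ s, ∑ m : Fin M, ∑ b ∈ t, ∑ c ∈ r, f a b c m :=
        Finset.sum_congr rfl fun a _ => Finset.sum_comm
    _ = ∑ m : Fin M, ∑ a ∈ s, ∑ b ∈ t, ∑ c ∈ r, f a b c m := Finset.sum_comm

lemma pull4 {α β γ δ : Type*} (s : Finset α) (t : Finset β) (r : Finset γ) (q : Finset δ)
    (f : α → β → γ → δ → Fin M → ℝ) :
    ∑ a ∈ s, ∑ b ∈ t, ∑ c ∈ r, ∑ d ∈ q, ∑ m : Fin M, f a b c d m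
      = ∑ m : Fin M, ∑ a ∈ s, ∑ b ∈ t, ∑ c ∈ r, ∑ d ∈ q, f a b c d m := by
  calc ∑ a ∈ s, ∑ b ∈ t, ∑ c ∈ r, ∑ d ∈ q, ∑ m : Fin M, f a b c d m
      = ∑ a ∈ s, ∑ m : Fin M, ∑ b ∈ t, ∑ c ∈ r, ∑ d ∈ q, f a b c d m :=
        Finset.sum_congr rfl fun a _ => pull3 t r q (fun b c d m => f a b c d m)
    _ = ∑ m : Fin M, ∑ a ∈ s, ∑ b ∈ t, ∑ c ∈ r, ∑ d ∈ q, f a b c d m := Finset.sum_comm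

lemma filter_pair_sum (m : Fin M)
    (X Y : Finset (Fin N)) (p q : Fin N → Prop) [DecidablePred p] [DecidablePred q]
    (w : Fin N → Fin N → Fin M) :
    (∑ x ∈ X.filter p, ∑ y ∈ Y.filter q, ee w m x y)
      = ∑ x ∈ X, ∑ y ∈ Y, if (p x ∧ q y ∧ w x y = m) then (1:ℝ) else 0 := by
  rw [Finset.sum_filter]
  apply Finset.sum_congr rfl; intro x _
  by_cases h1 : p x
  · rw [if_pos h1, Finset.sum_filter]
    apply Finset.sum_congr rfl; intro y _
    by_cases h2 : q y
    · simp [h1, h2, ee]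
    · simp [h1, h2]
  · rw [if_neg h1]
    symm; apply Finset.sum_eq_zero; intro y _
    simp [h1]

lemma card_eq_triple {N : ℕ} (D : Finset (Fin N × Fin N × Fin N)) :
    (D.card : ℝ) = ∑ x : Fin N, ∑ y : Fin N, ∑ z : Fin N, ind D x y z := by
  calc (D.card : ℝ)
      = ∑ p ∈ (Finset.univ : Finset (Fin N × Fin N × Fin N)),
          if p ∈ D then (1:ℝ) else 0 := by
        rw [Finset.sum_ite_mem, Finset.univ_inter, Finset.sum_const, nsmul_eq_mul, mul_one]
    _ = ∑ x : Fin N, ∑ q : Fin N × Fin N, if (x, q) ∈ D then (1:ℝ) else 0 :=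
        Fintype.sum_prod_type _
    _ = ∑ x : Fin N, ∑ y : Fin N, ∑ z : Fin N, ind D x y z := by
        apply Finset.sum_congr rfl; intro x _
        rw [Fintype.sum_prod_type]
        rfl

lemma num1_eq (Col : Fin N → Fin N → Fin M) (D : Finset (Fin N × Fin N × Fin N))
    (hD : D = Finset.univ.filter fun p : Fin N × Fin N × Fin N =>
        Col p.1 p.2.1 = Col p.1 p.2.2 ∧ Col p.1 p.2.2 = Col p.2.1 p.2.2)
    (X Y Z : Finset (Fin N)) :
    (∑ x ∈ X, ∑ y ∈ Y, ∑ z ∈ Z, ind D x y z)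
      = ∑ m : Fin M, ∑ z ∈ Z, ∑ x ∈ X.filter (fun x => Col x z = m),
          ∑ y ∈ Y.filter (fun y => Col y z = m), ee Col m x y := by
  subst hD
  calc (∑ x ∈ X, ∑ y ∈ Y, ∑ z ∈ Z, ind _ x y z)
      = ∑ x ∈ X, ∑ y ∈ Y, ∑ z ∈ Z, ∑ m : Fin M,
          (if (Col x z = m ∧ Col y z = m ∧ Col x y = m) then (1:ℝ) else 0) :=
        Finset.sum_congr rfl fun x _ => Finset.sum_congr rfl fun y _ =>
          Finset.sum_congr rfl fun z _ => ind_sum3 Col x y z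
    _ = ∑ m : Fin M, ∑ x ∈ X, ∑ y ∈ Y, ∑ z ∈ Z,
          (if (Col x z = m ∧ Col y z = m ∧ Col x y = m) then (1:ℝ) else 0) :=
        pull3 X Y Z _
    _ = ∑ m : Fin M, ∑ z ∈ Z, ∑ x ∈ X, ∑ y ∈ Y,
          (if (Col x z = m ∧ Col y z = m ∧ Col x y = m) then (1:ℝ) else 0) :=
        Finset.sum_congr rfl fun m _ => comm3 X Y Z _
    _ = ∑ m : Fin M, ∑ z ∈ Z, ∑ x ∈ X.filter (fun x => Col x z = m),
          ∑ y ∈ Y.filter (fun y => Col y z = m), ee Col m x y :=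
        Finset.sum_congr rfl fun m _ => Finset.sum_congr rfl fun z _ =>
          (filter_pair_sum m X Y _ _ Col).symm

lemma num2Z_eq (Col : Fin N → Fin N → Fin M) (D : Finset (Fin N × Fin N × Fin N))
    (hD : D = Finset.univ.filter fun p : Fin N × Fin N × Fin N =>
        Col p.1 p.2.1 = Col p.1 p.2.2 ∧ Col p.1 p.2.2 = Col p.2.1 p.2.2)
    (X Y Z : Finset (Fin N)) :
    (∑ x ∈ X, ∑ y ∈ Y, ∑ z ∈ Z, ∑ z' ∈ Z, ind D x y z * ind D x y z')
      = ∑ m : Fin M, ∑ z ∈ Z, ∑ z' ∈ Z,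
          ∑ x ∈ X.filter (fun x => Col x z = m ∧ Col x z' = m),
          ∑ y ∈ Y.filter (fun y => Col y z = m ∧ Col y z' = m), ee Col m x y := by
  subst hD
  calc (∑ x ∈ X, ∑ y ∈ Y, ∑ z ∈ Z, ∑ z' ∈ Z, ind _ x y z * ind _ x y z')
      = ∑ x ∈ X, ∑ y ∈ Y, ∑ z ∈ Z, ∑ z' ∈ Z, ∑ m : Fin M,
          (if ((Col x z = m ∧ Col x z' = m) ∧ (Col y z = m ∧ Col y z' = m)
            ∧ Col x y = m) then (1:ℝ) else 0) :=
        Finset.sum_congr rfl fun x _ => Finset.sum_congr rfl fun y _ =>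
          Finset.sum_congr rfl fun z _ => Finset.sum_congr rfl fun z' _ =>
            ind_mul_ind_zz Col x y z z'
    _ = ∑ m : Fin M, ∑ x ∈ X, ∑ y ∈ Y, ∑ z ∈ Z, ∑ z' ∈ Z,
          (if ((Col x z = m ∧ Col x z' = m) ∧ (Col y z = m ∧ Col y z' = m)
            ∧ Col x y = m) then (1:ℝ) else 0) := pull4 X Y Z Z _
    _ = ∑ m : Fin M, ∑ z ∈ Z, ∑ z' ∈ Z, ∑ x ∈ X, ∑ y ∈ Y,
          (if ((Col x z = m ∧ Col x z' = m) ∧ (Col y z = m ∧ Col y z' = m)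
            ∧ Col x y = m) then (1:ℝ) else 0) :=
        Finset.sum_congr rfl fun m _ => comm4 X Y Z Z _
    _ = ∑ m : Fin M, ∑ z ∈ Z, ∑ z' ∈ Z,
          ∑ x ∈ X.filter (fun x => Col x z = m ∧ Col x z' = m),
          ∑ y ∈ Y.filter (fun y => Col y z = m ∧ Col y z' = m), ee Col m x y :=
        Finset.sum_congr rfl fun m _ => Finset.sum_congr rfl fun z _ =>
          Finset.sum_congr rfl fun z' _ => (filter_pair_sum m X Y _ _ Col).symm

lemma num2X_eq (Col : Fin N → Fin N → Fin M) (D : Finset (Fin N × Fin N × Fin N))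
    (hD : D = Finset.univ.filter fun p : Fin N × Fin N × Fin N =>
        Col p.1 p.2.1 = Col p.1 p.2.2 ∧ Col p.1 p.2.2 = Col p.2.1 p.2.2)
    (X Y Z : Finset (Fin N)) :
    (∑ x ∈ X, ∑ x' ∈ X, ∑ y ∈ Y, ∑ z ∈ Z, ind D x y z * ind D x' y z)
      = ∑ m : Fin M, ∑ x ∈ X, ∑ x' ∈ X,
          ∑ y ∈ Y.filter (fun y => Col x y = m ∧ Col x' y = m),
          ∑ z ∈ Z.filter (fun z => Col x z = m ∧ Col x' z = m), ee Col m y z := by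
  subst hD
  calc (∑ x ∈ X, ∑ x' ∈ X, ∑ y ∈ Y, ∑ z ∈ Z, ind _ x y z * ind _ x' y z)
      = ∑ x ∈ X, ∑ x' ∈ X, ∑ y ∈ Y, ∑ z ∈ Z, ∑ m : Fin M,
          (if ((Col x y = m ∧ Col x' y = m) ∧ (Col x z = m ∧ Col x' z = m)
            ∧ Col y z = m) then (1:ℝ) else 0) :=
        Finset.sum_congr rfl fun x _ => Finset.sum_congr rfl fun x' _ =>
          Finset.sum_congr rfl fun y _ => Finset.sum_congr rfl fun z _ =>
            ind_mul_ind_xx Col x x' y z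
    _ = ∑ m : Fin M, ∑ x ∈ X, ∑ x' ∈ X, ∑ y ∈ Y, ∑ z ∈ Z,
          (if ((Col x y = m ∧ Col x' y = m) ∧ (Col x z = m ∧ Col x' z = m)
            ∧ Col y z = m) then (1:ℝ) else 0) := pull4 X X Y Z _
    _ = ∑ m : Fin M, ∑ x ∈ X, ∑ x' ∈ X,
          ∑ y ∈ Y.filter (fun y => Col x y = m ∧ Col x' y = m),
          ∑ z ∈ Z.filter (fun z => Col x z = m ∧ Col x' z = m), ee Col m y z :=
        Finset.sum_congr rfl fun m _ => Finset.sum_congr rfl fun x _ =>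
          Finset.sum_congr rfl fun x' _ => (filter_pair_sum m Y Z _ _ Col).symm

lemma num2Y_eq (Col : Fin N → Fin N → Fin M) (D : Finset (Fin N × Fin N × Fin N))
    (hD : D = Finset.univ.filter fun p : Fin N × Fin N × Fin N =>
        Col p.1 p.2.1 = Col p.1 p.2.2 ∧ Col p.1 p.2.2 = Col p.2.1 p.2.2)
    (X Y Z : Finset (Fin N)) :
    (∑ x ∈ X, ∑ y ∈ Y, ∑ y' ∈ Y, ∑ z ∈ Z, ind D x y z * ind D x y' z)
      = ∑ m : Fin M, ∑ y ∈ Y, ∑ y' ∈ Y,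
          ∑ x ∈ X.filter (fun x => Col x y = m ∧ Col x y' = m),
          ∑ z ∈ Z.filter (fun z => Col y z = m ∧ Col y' z = m), ee Col m x z := by
  subst hD
  calc (∑ x ∈ X, ∑ y ∈ Y, ∑ y' ∈ Y, ∑ z ∈ Z, ind _ x y z * ind _ x y' z)
      = ∑ x ∈ X, ∑ y ∈ Y, ∑ y' ∈ Y, ∑ z ∈ Z, ∑ m : Fin M,
          (if ((Col x y = m ∧ Col x y' = m) ∧ (Col y z = m ∧ Col y' z = m)
            ∧ Col x z = m) then (1:ℝ) else 0) :=
        Finset.sum_congr rfl fun x _ => Finset.sum_congr rfl fun y _ =>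
          Finset.sum_congr rfl fun y' _ => Finset.sum_congr rfl fun z _ =>
            ind_mul_ind_yy Col x y y' z
    _ = ∑ m : Fin M, ∑ x ∈ X, ∑ y ∈ Y, ∑ y' ∈ Y, ∑ z ∈ Z,
          (if ((Col x y = m ∧ Col x y' = m) ∧ (Col y z = m ∧ Col y' z = m)
            ∧ Col x z = m) then (1:ℝ) else 0) := pull4 X Y Y Z _
    _ = ∑ m : Fin M, ∑ y ∈ Y, ∑ y' ∈ Y, ∑ x ∈ X, ∑ z ∈ Z,
          (if ((Col x y = m ∧ Col x y' = m) ∧ (Col y z = m ∧ Col y' z = m)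
            ∧ Col x z = m) then (1:ℝ) else 0) :=
        Finset.sum_congr rfl fun m _ =>
          (comm3 Y Y X (fun y y' x => ∑ z ∈ Z,
            (if ((Col x y = m ∧ Col x y' = m) ∧ (Col y z = m ∧ Col y' z = m)
              ∧ Col x z = m) then (1:ℝ) else 0))).symm
    _ = ∑ m : Fin M, ∑ y ∈ Y, ∑ y' ∈ Y,
          ∑ x ∈ X.filter (fun x => Col x y = m ∧ Col x y' = m),
          ∑ z ∈ Z.filter (fun z => Col y z = m ∧ Col y' z = m), ee Col m x z :=
        Finset.sum_congr rfl fun m _ => Finset.sum_congr rfl fun y _ =>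
          Finset.sum_congr rfl fun y' _ => (filter_pair_sum m X Z _ _ Col).symm

lemma final_est (num S p γ err : ℝ) (hS0 : 0 < S) (h : |num - S * p| ≤ err)
    (hend : err ≤ γ / 200 * p * S) : |num / S - p| ≤ γ / 200 * p := by
  have e : num / S - p = (num - S * p) / S := by field_simp
  rw [e, abs_div, abs_of_pos hS0, div_le_iff₀ hS0]
  calc |num - S * p| ≤ err := h
    _ ≤ γ / 200 * p * S := hend

lemma approx_one (a b p γ : ℝ) (hp : 0 < p) (hγ0 : 0 < γ) (hγ1 : γ < 1)
    (ha : |a - p| ≤ γ / 200 * p) (hb : |b - p| ≤ γ / 200 * p) : Approx a b γ := by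
  rw [abs_le] at ha hb
  constructor <;> nlinarith [ha.1, ha.2, hb.1, hb.2, mul_pos hγ0 hp]

lemma approx_sq (a b p γ : ℝ) (hp : 0 < p) (hγ0 : 0 < γ) (hγ1 : γ < 1)
    (ha : |a - p ^ 2| ≤ γ / 200 * p ^ 2) (hb : |b - p| ≤ γ / 200 * p) :
    Approx a (b ^ 2) γ := by
  rw [abs_le] at ha hb
  have hb0 : 0 < b := by nlinarith
  constructor <;>
    nlinarith [hb.1, hb.2, ha.1, ha.2, mul_pos hγ0 (mul_pos hp hp), sq_nonneg (b - p),
      sq_nonneg (b + p), mul_pos hb0 hb0, mul_pos hp hp, mul_pos hγ0 hp,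
      mul_le_mul_of_nonneg_left hb.2 (le_of_lt hb0),
      mul_le_mul_of_nonneg_left hb.1 (le_of_lt hb0)]

end PfAux
set_option maxHeartbeats 2000000 in
/-- the set of monochromatic triangles of a good expander coloring
is pseudorandom with respect to large cubes. -/
theorem expander_coloring_pseudorandom :
    ∃ c : ℝ, 0 < c ∧
      ∀ (N M : ℕ) (η γ : ℝ) (Col : Fin N → Fin N → Fin M),
        0 < N → 0 < M → 0 < γ → γ < 1 →
        IsExpanderColoring N M η Col →
        η ≤ c * γ ^ 3 / (M : ℝ) ^ 5 →
        PseudorandomLargeCubes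
          (Finset.univ.filter fun p : Fin N × Fin N × Fin N =>
            Col p.1 p.2.1 = Col p.1 p.2.2 ∧ Col p.1 p.2.2 = Col p.2.1 p.2.2) γ := by
  refine ⟨1/2000, by norm_num, ?_⟩
  intro N M η γ Col hN hM hγ0 hγ1 hexp hηle
  intro X Y Z hbig
  have hNr : (0:ℝ) < N := by exact_mod_cast hN
  have hN3 : (0:ℝ) < (N:ℝ) ^ 3 := by positivity
  have hN4 : (0:ℝ) < (N:ℝ) ^ 4 := by positivity
  have hS0 : (0:ℝ) < (X.card:ℝ) * Y.card * Z.card :=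
    lt_of_lt_of_le (mul_pos hγ0 hN3) hbig
  have hX0 : (0:ℝ) ≤ (X.card:ℝ) := by positivity
  have hY0 : (0:ℝ) ≤ (Y.card:ℝ) := by positivity
  have hZ0 : (0:ℝ) ≤ (Z.card:ℝ) := by positivity
  by_cases hM1 : M = 1
  · -- trivial case M = 1
    subst hM1
    have hDu : (Finset.univ.filter fun p : Fin N × Fin N × Fin N =>
        Col p.1 p.2.1 = Col p.1 p.2.2 ∧ Col p.1 p.2.2 = Col p.2.1 p.2.2)
        = (Finset.univ : Finset (Fin N × Fin N × Fin N)) := by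
      apply Finset.filter_true_of_mem
      intro p _
      exact ⟨Subsingleton.elim _ _, Subsingleton.elim _ _⟩
    rw [hDu]
    have hXc : (0:ℝ) < (X.card:ℝ) := by nlinarith [mul_nonneg hY0 hZ0]
    have hYc : (0:ℝ) < (Y.card:ℝ) := by nlinarith [mul_nonneg hX0 hZ0]
    have hZc : (0:ℝ) < (Z.card:ℝ) := by nlinarith [mul_nonneg hX0 hY0]
    have hind : ∀ x y z : Fin N, ind (Finset.univ : Finset (Fin N × Fin N × Fin N)) x y z = 1 := by
      intro x y z; simp [ind]
    have hdens : density (Finset.univ : Finset (Fin N × Fin N × Fin N)) = 1 := by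
      rw [density, Finset.card_univ]
      simp only [Fintype.card_prod, Fintype.card_fin]
      push_cast
      field_simp
    have h11 : Approx 1 1 γ := ⟨by nlinarith, by nlinarith⟩
    refine ⟨?_, ?_, ?_, ?_⟩
    · rw [avg1, hdens]
      have : (∑ x ∈ X, ∑ y ∈ Y, ∑ z ∈ Z,
          ind (Finset.univ : Finset (Fin N × Fin N × Fin N)) x y z)
          = (X.card:ℝ) * Y.card * Z.card := by
        simp only [hind]
        simp [Finset.sum_const, nsmul_eq_mul]
        ring
      rw [this, div_self hS0.ne']
      exact h11
    · rw [avg2Z, hdens, one_pow]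
      have : (∑ x ∈ X, ∑ y ∈ Y, ∑ z ∈ Z, ∑ z' ∈ Z,
          ind (Finset.univ : Finset (Fin N × Fin N × Fin N)) x y z
          * ind (Finset.univ : Finset (Fin N × Fin N × Fin N)) x y z')
          = (X.card:ℝ) * Y.card * Z.card * Z.card := by
        simp only [hind, one_mul]
        simp [Finset.sum_const, nsmul_eq_mul]
        ring
      rw [this, div_self (by positivity : ((X.card:ℝ) * Y.card * Z.card * Z.card) ≠ 0)]
      exact h11
    · rw [avg2X, hdens, one_pow]
      have : (∑ x ∈ X, ∑ x' ∈ X, ∑ y ∈ Y, ∑ z ∈ Z,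
          ind (Finset.univ : Finset (Fin N × Fin N × Fin N)) x y z
          * ind (Finset.univ : Finset (Fin N × Fin N × Fin N)) x' y z)
          = (X.card:ℝ) * X.card * Y.card * Z.card := by
        simp only [hind, one_mul]
        simp [Finset.sum_const, nsmul_eq_mul]
        ring
      rw [this, div_self (by positivity : ((X.card:ℝ) * X.card * Y.card * Z.card) ≠ 0)]
      exact h11
    · rw [avg2Y, hdens, one_pow]
      have : (∑ x ∈ X, ∑ y ∈ Y, ∑ y' ∈ Y, ∑ z ∈ Z,
          ind (Finset.univ : Finset (Fin N × Fin N × Fin N)) x y z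
          * ind (Finset.univ : Finset (Fin N × Fin N × Fin N)) x y' z)
          = (X.card:ℝ) * Y.card * Y.card * Z.card := by
        simp only [hind, one_mul]
        simp [Finset.sum_const, nsmul_eq_mul]
        ring
      rw [this, div_self (by positivity : ((X.card:ℝ) * Y.card * Y.card * Z.card) ≠ 0)]
      exact h11
  · -- main case M ≥ 2
    have hM2 : 2 ≤ M := by omega
    have hMp : (0:ℝ) < M := by exact_mod_cast hM
    have hMR : (1:ℝ) ≤ M := by exact_mod_cast hM
    have hM5 : (0:ℝ) < (M:ℝ) ^ 5 := by positivity
    -- η is nonnegative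
    have hη0 : 0 ≤ η := by
      by_contra hneg
      push_neg at hneg
      have hnt : Nontrivial (Fin M) := Fin.nontrivial_iff_two_le.mpr hM2
      set x0 : Fin N := ⟨0, hN⟩
      obtain ⟨m, hm⟩ := exists_ne (Col x0 x0)
      have h1 : η * N ≤ ((({x0} : Finset (Fin N))).card : ℝ) := by
        simp only [Finset.card_singleton, Nat.cast_one]
        nlinarith
      have h := hexp {x0} {x0} h1 h1 m
      have hemp : (({x0} : Finset (Fin N)) ×ˢ {x0}).filter (fun p => Col p.1 p.2 = m) = ∅ := by
        rw [Finset.singleton_product_singleton, Finset.filter_singleton, if_neg]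
        exact fun hc => hm hc.symm
      rw [hemp] at h
      obtain ⟨hl, _⟩ := h
      simp only [Finset.card_empty, Nat.cast_zero, Finset.card_singleton, Nat.cast_one] at hl
      have hMinv : (0:ℝ) < 1 / M := by positivity
      nlinarith [mul_pos hMinv (show (0:ℝ) < 1 - η by linarith)]
    -- pair bounds for both orientations
    have hP : ∀ (A B : Finset (Fin N)) (m : Fin M),
        |(∑ a ∈ A, ∑ b ∈ B, PfAux.ee Col m a b) - (A.card:ℝ) * B.card / M| ≤ 2 * η * (N:ℝ) ^ 2 :=
      PfAux.pair_bound Col η hM hη0 hexp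
    have hPR : ∀ (A B : Finset (Fin N)) (m : Fin M),
        |(∑ a ∈ A, ∑ b ∈ B, PfAux.ee (fun p q => Col q p) m a b) - (A.card:ℝ) * B.card / M|
          ≤ 2 * η * (N:ℝ) ^ 2 := by
      intro A B m
      have h := hP B A m
      rw [show ((B.card:ℝ) * A.card) = (A.card:ℝ) * B.card from mul_comm _ _] at h
      have e : (∑ a ∈ A, ∑ b ∈ B, PfAux.ee (fun p q => Col q p) m a b)
          = ∑ b ∈ B, ∑ a ∈ A, PfAux.ee Col m b a := Finset.sum_comm
      rw [e]; exact h
    set D := Finset.univ.filter (fun p : Fin N × Fin N × Fin N =>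
      Col p.1 p.2.1 = Col p.1 p.2.2 ∧ Col p.1 p.2.2 = Col p.2.1 p.2.2) with hDdef
    -- count bounds
    have hT1 : ∀ A B C : Finset (Fin N),
        |(∑ x ∈ A, ∑ y ∈ B, ∑ z ∈ C, ind D x y z) - (A.card:ℝ) * B.card * C.card / (M:ℝ) ^ 2|
          ≤ (M:ℝ) * (6 * η * (N:ℝ) ^ 3) := by
      intro A B C
      rw [PfAux.num1_eq Col D hDdef A B C]
      have hs := PfAux.sum_close (Finset.univ : Finset (Fin M))
        (fun m => ∑ z ∈ C, ∑ x ∈ A.filter (fun x => Col x z = m),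
          ∑ y ∈ B.filter (fun y => Col y z = m), PfAux.ee Col m x y)
        (fun _ => (A.card:ℝ) * B.card * C.card / (M:ℝ) ^ 3)
        (6 * η * (N:ℝ) ^ 3)
        (fun m _ => PfAux.tri_bound η hη0 hM Col Col Col hP hP hP A B C m)
      have hconst : (∑ _m : Fin M, (A.card:ℝ) * B.card * C.card / (M:ℝ) ^ 3)
          = (A.card:ℝ) * B.card * C.card / (M:ℝ) ^ 2 := by
        rw [Finset.sum_const, Finset.card_univ, Fintype.card_fin, nsmul_eq_mul]
        field_simp
      rw [hconst] at hs
      simpa using hs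
    have hT2Z :
        |(∑ x ∈ X, ∑ y ∈ Y, ∑ z ∈ Z, ∑ z' ∈ Z, ind D x y z * ind D x y z')
          - (X.card:ℝ) * Y.card * (Z.card:ℝ) ^ 2 / (M:ℝ) ^ 4|
          ≤ (M:ℝ) * (10 * η * (N:ℝ) ^ 4) := by
      rw [PfAux.num2Z_eq Col D hDdef X Y Z]
      have hs := PfAux.sum_close (Finset.univ : Finset (Fin M))
        (fun m => ∑ z ∈ Z, ∑ z' ∈ Z,
          ∑ x ∈ X.filter (fun x => Col x z = m ∧ Col x z' = m),
          ∑ y ∈ Y.filter (fun y => Col y z = m ∧ Col y z' = m), PfAux.ee Col m x y)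
        (fun _ => (X.card:ℝ) * Y.card * (Z.card:ℝ) ^ 2 / (M:ℝ) ^ 5)
        (10 * η * (N:ℝ) ^ 4)
        (fun m _ => PfAux.k5_bound η hη0 hM Col Col Col hP hP hP X Y Z m)
      have hconst : (∑ _m : Fin M, (X.card:ℝ) * Y.card * (Z.card:ℝ) ^ 2 / (M:ℝ) ^ 5)
          = (X.card:ℝ) * Y.card * (Z.card:ℝ) ^ 2 / (M:ℝ) ^ 4 := by
        rw [Finset.sum_const, Finset.card_univ, Fintype.card_fin, nsmul_eq_mul]
        field_simp
      rw [hconst] at hs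
      simpa using hs
    have hT2X :
        |(∑ x ∈ X, ∑ x' ∈ X, ∑ y ∈ Y, ∑ z ∈ Z, ind D x y z * ind D x' y z)
          - (Y.card:ℝ) * Z.card * (X.card:ℝ) ^ 2 / (M:ℝ) ^ 4|
          ≤ (M:ℝ) * (10 * η * (N:ℝ) ^ 4) := by
      rw [PfAux.num2X_eq Col D hDdef X Y Z]
      have hs := PfAux.sum_close (Finset.univ : Finset (Fin M))
        (fun m => ∑ x ∈ X, ∑ x' ∈ X,
          ∑ y ∈ Y.filter (fun y => Col x y = m ∧ Col x' y = m),
          ∑ z ∈ Z.filter (fun z => Col x z = m ∧ Col x' z = m), PfAux.ee Col m y z)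
        (fun _ => (Y.card:ℝ) * Z.card * (X.card:ℝ) ^ 2 / (M:ℝ) ^ 5)
        (10 * η * (N:ℝ) ^ 4)
        (fun m _ => PfAux.k5_bound η hη0 hM (fun p q => Col q p) (fun p q => Col q p) Col
          hPR hPR hP Y Z X m)
      have hconst : (∑ _m : Fin M, (Y.card:ℝ) * Z.card * (X.card:ℝ) ^ 2 / (M:ℝ) ^ 5)
          = (Y.card:ℝ) * Z.card * (X.card:ℝ) ^ 2 / (M:ℝ) ^ 4 := by
        rw [Finset.sum_const, Finset.card_univ, Fintype.card_fin, nsmul_eq_mul]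
        field_simp
      rw [hconst] at hs
      simpa using hs
    have hT2Y :
        |(∑ x ∈ X, ∑ y ∈ Y, ∑ y' ∈ Y, ∑ z ∈ Z, ind D x y z * ind D x y' z)
          - (X.card:ℝ) * Z.card * (Y.card:ℝ) ^ 2 / (M:ℝ) ^ 4|
          ≤ (M:ℝ) * (10 * η * (N:ℝ) ^ 4) := by
      rw [PfAux.num2Y_eq Col D hDdef X Y Z]
      have hs := PfAux.sum_close (Finset.univ : Finset (Fin M))
        (fun m => ∑ y ∈ Y, ∑ y' ∈ Y,
          ∑ x ∈ X.filter (fun x => Col x y = m ∧ Col x y' = m),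
          ∑ z ∈ Z.filter (fun z => Col y z = m ∧ Col y' z = m), PfAux.ee Col m x z)
        (fun _ => (X.card:ℝ) * Z.card * (Y.card:ℝ) ^ 2 / (M:ℝ) ^ 5)
        (10 * η * (N:ℝ) ^ 4)
        (fun m _ => PfAux.k5_bound η hη0 hM Col (fun p q => Col q p) Col
          hP hPR hP X Z Y m)
      have hconst : (∑ _m : Fin M, (X.card:ℝ) * Z.card * (Y.card:ℝ) ^ 2 / (M:ℝ) ^ 5)
          = (X.card:ℝ) * Z.card * (Y.card:ℝ) ^ 2 / (M:ℝ) ^ 4 := by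
        rw [Finset.sum_const, Finset.card_univ, Fintype.card_fin, nsmul_eq_mul]
        field_simp
      rw [hconst] at hs
      simpa using hs
    -- numeric facts
    have hη' : η * (M:ℝ) ^ 5 ≤ γ ^ 3 / 2000 := by
      rw [← le_div_iff₀ hM5]
      calc η ≤ 1/2000 * γ ^ 3 / (M:ℝ) ^ 5 := hηle
        _ = (γ ^ 3 / 2000) / (M:ℝ) ^ 5 := by ring
    have hM35 : (M:ℝ) ^ 3 ≤ (M:ℝ) ^ 5 := by
      apply pow_le_pow_right₀ hMR
      norm_num
    have hγ3γ : γ ^ 3 ≤ γ := by nlinarith [mul_pos hγ0 hγ0]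
    have hkey0 : η * (M:ℝ) ^ 3 ≤ γ / 2000 := by
      calc η * (M:ℝ) ^ 3 ≤ η * (M:ℝ) ^ 5 := mul_le_mul_of_nonneg_left hM35 hη0
        _ ≤ γ ^ 3 / 2000 := hη'
        _ ≤ γ / 2000 := by linarith
    have hkey1 : η * (M:ℝ) ^ 3 ≤ γ ^ 3 / 2000 :=
      le_trans (mul_le_mul_of_nonneg_left hM35 hη0) hη'
    -- card lower bounds
    have hXY : (X.card:ℝ) * Y.card ≤ (N:ℝ) * N :=
      mul_le_mul (PfAux.card_le_N X) (PfAux.card_le_N Y) hY0 hNr.le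
    have hZγ : γ * (N:ℝ) ≤ (Z.card:ℝ) := by
      have h2 : γ * (N:ℝ) ^ 3 ≤ (N:ℝ) * N * Z.card :=
        le_trans hbig (mul_le_mul_of_nonneg_right hXY hZ0)
      nlinarith [mul_pos hNr hNr]
    have hXγ : γ * (N:ℝ) ≤ (X.card:ℝ) := by
      have hYZ : (Y.card:ℝ) * Z.card ≤ (N:ℝ) * N :=
        mul_le_mul (PfAux.card_le_N Y) (PfAux.card_le_N Z) hZ0 hNr.le
      have h2 : γ * (N:ℝ) ^ 3 ≤ (X.card:ℝ) * ((N:ℝ) * N) := by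
        calc γ * (N:ℝ) ^ 3 ≤ (X.card:ℝ) * Y.card * Z.card := hbig
          _ = (X.card:ℝ) * ((Y.card:ℝ) * Z.card) := by ring
          _ ≤ (X.card:ℝ) * ((N:ℝ) * N) := mul_le_mul_of_nonneg_left hYZ hX0
      nlinarith [mul_pos hNr hNr]
    have hYγ : γ * (N:ℝ) ≤ (Y.card:ℝ) := by
      have hXZ : (X.card:ℝ) * Z.card ≤ (N:ℝ) * N :=
        mul_le_mul (PfAux.card_le_N X) (PfAux.card_le_N Z) hZ0 hNr.le
      have h2 : γ * (N:ℝ) ^ 3 ≤ (Y.card:ℝ) * ((N:ℝ) * N) := by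
        calc γ * (N:ℝ) ^ 3 ≤ (X.card:ℝ) * Y.card * Z.card := hbig
          _ = (Y.card:ℝ) * ((X.card:ℝ) * Z.card) := by ring
          _ ≤ (Y.card:ℝ) * ((N:ℝ) * N) := mul_le_mul_of_nonneg_left hXZ hY0
      nlinarith [mul_pos hNr hNr]
    have hcoef1 : (0:ℝ) ≤ γ / 200 * (1 / (M:ℝ) ^ 2) :=
      mul_nonneg (div_nonneg hγ0.le (by norm_num)) (by positivity)
    have hcoef2 : (0:ℝ) ≤ γ / 200 * (1 / (M:ℝ) ^ 4) :=
      mul_nonneg (div_nonneg hγ0.le (by norm_num)) (by positivity)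
    -- density estimate
    have hdcard : |(D.card:ℝ) - (N:ℝ) ^ 3 * (1 / (M:ℝ) ^ 2)| ≤ (M:ℝ) * (6 * η * (N:ℝ) ^ 3) := by
      have h := hT1 Finset.univ Finset.univ Finset.univ
      rw [← PfAux.card_eq_triple D] at h
      simp only [Finset.card_univ, Fintype.card_fin] at h
      rw [show (N:ℝ) * N * N / (M:ℝ) ^ 2 = (N:ℝ) ^ 3 * (1 / (M:ℝ) ^ 2) from by ring] at h
      exact h
    have hdens : |density D - 1 / (M:ℝ) ^ 2| ≤ γ / 200 * (1 / (M:ℝ) ^ 2) := by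
      rw [density]
      apply PfAux.final_est _ _ _ γ _ hN3 hdcard
      rw [show γ / 200 * (1 / (M:ℝ) ^ 2) * (N:ℝ) ^ 3 = γ * (N:ℝ) ^ 3 / (200 * (M:ℝ) ^ 2)
        from by ring, le_div_iff₀ (by positivity)]
      nlinarith [mul_le_mul_of_nonneg_right hkey0 hN3.le, mul_pos hγ0 hN3]
    -- avg1 estimate
    have ha1 : |avg1 D X Y Z - 1 / (M:ℝ) ^ 2| ≤ γ / 200 * (1 / (M:ℝ) ^ 2) := by
      rw [avg1]
      have h := hT1 X Y Z
      rw [show (X.card:ℝ) * Y.card * Z.card / (M:ℝ) ^ 2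
        = (X.card:ℝ) * Y.card * Z.card * (1 / (M:ℝ) ^ 2) from by ring] at h
      apply PfAux.final_est _ _ _ γ _ hS0 h
      calc (M:ℝ) * (6 * η * (N:ℝ) ^ 3)
          ≤ γ / 200 * (1 / (M:ℝ) ^ 2) * (γ * (N:ℝ) ^ 3) := by
            rw [show γ / 200 * (1 / (M:ℝ) ^ 2) * (γ * (N:ℝ) ^ 3)
              = γ ^ 2 * (N:ℝ) ^ 3 / (200 * (M:ℝ) ^ 2) from by ring,
              le_div_iff₀ (by positivity)]
            nlinarith [mul_le_mul_of_nonneg_right hkey1 hN3.le,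
              mul_le_mul_of_nonneg_right
                (mul_le_mul_of_nonneg_left hγ1.le (sq_nonneg γ)) hN3.le]
        _ ≤ γ / 200 * (1 / (M:ℝ) ^ 2) * ((X.card:ℝ) * Y.card * Z.card) :=
            mul_le_mul_of_nonneg_left hbig hcoef1
    -- avg2 estimates
    have hS2Zγ : γ ^ 2 * (N:ℝ) ^ 4 ≤ (X.card:ℝ) * Y.card * Z.card * Z.card := by
      nlinarith [mul_le_mul hbig hZγ (mul_nonneg hγ0.le hNr.le) hS0.le]
    have hS2Xγ : γ ^ 2 * (N:ℝ) ^ 4 ≤ (X.card:ℝ) * X.card * Y.card * Z.card := by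
      nlinarith [mul_le_mul hbig hXγ (mul_nonneg hγ0.le hNr.le) hS0.le]
    have hS2Yγ : γ ^ 2 * (N:ℝ) ^ 4 ≤ (X.card:ℝ) * Y.card * Y.card * Z.card := by
      nlinarith [mul_le_mul hbig hYγ (mul_nonneg hγ0.le hNr.le) hS0.le]
    have hγ2N4 : (0:ℝ) < γ ^ 2 * (N:ℝ) ^ 4 := mul_pos (pow_pos hγ0 2) hN4
    have herr2 : (M:ℝ) * (10 * η * (N:ℝ) ^ 4)
        ≤ γ / 200 * (1 / (M:ℝ) ^ 4) * (γ ^ 2 * (N:ℝ) ^ 4) := by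
      rw [show γ / 200 * (1 / (M:ℝ) ^ 4) * (γ ^ 2 * (N:ℝ) ^ 4)
        = γ ^ 3 * (N:ℝ) ^ 4 / (200 * (M:ℝ) ^ 4) from by ring,
        le_div_iff₀ (by positivity)]
      nlinarith [mul_le_mul_of_nonneg_right hη' hN4.le]
    have ha2Z : |avg2Z D X Y Z - 1 / (M:ℝ) ^ 4| ≤ γ / 200 * (1 / (M:ℝ) ^ 4) := by
      rw [avg2Z]
      have h := hT2Z
      rw [show (X.card:ℝ) * Y.card * (Z.card:ℝ) ^ 2 / (M:ℝ) ^ 4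
        = (X.card:ℝ) * Y.card * Z.card * Z.card * (1 / (M:ℝ) ^ 4) from by ring] at h
      apply PfAux.final_est _ _ _ γ _ (lt_of_lt_of_le hγ2N4 hS2Zγ) h
      calc (M:ℝ) * (10 * η * (N:ℝ) ^ 4)
          ≤ γ / 200 * (1 / (M:ℝ) ^ 4) * (γ ^ 2 * (N:ℝ) ^ 4) := herr2
        _ ≤ γ / 200 * (1 / (M:ℝ) ^ 4) * ((X.card:ℝ) * Y.card * Z.card * Z.card) :=
            mul_le_mul_of_nonneg_left hS2Zγ hcoef2
    have ha2X : |avg2X D X Y Z - 1 / (M:ℝ) ^ 4| ≤ γ / 200 * (1 / (M:ℝ) ^ 4) := by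
      rw [avg2X]
      have h := hT2X
      rw [show (Y.card:ℝ) * Z.card * (X.card:ℝ) ^ 2 / (M:ℝ) ^ 4
        = (X.card:ℝ) * X.card * Y.card * Z.card * (1 / (M:ℝ) ^ 4) from by ring] at h
      apply PfAux.final_est _ _ _ γ _ (lt_of_lt_of_le hγ2N4 hS2Xγ) h
      calc (M:ℝ) * (10 * η * (N:ℝ) ^ 4)
          ≤ γ / 200 * (1 / (M:ℝ) ^ 4) * (γ ^ 2 * (N:ℝ) ^ 4) := herr2
        _ ≤ γ / 200 * (1 / (M:ℝ) ^ 4) * ((X.card:ℝ) * X.card * Y.card * Z.card) :=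
            mul_le_mul_of_nonneg_left hS2Xγ hcoef2
    have ha2Y : |avg2Y D X Y Z - 1 / (M:ℝ) ^ 4| ≤ γ / 200 * (1 / (M:ℝ) ^ 4) := by
      rw [avg2Y]
      have h := hT2Y
      rw [show (X.card:ℝ) * Z.card * (Y.card:ℝ) ^ 2 / (M:ℝ) ^ 4
        = (X.card:ℝ) * Y.card * Y.card * Z.card * (1 / (M:ℝ) ^ 4) from by ring] at h
      apply PfAux.final_est _ _ _ γ _ (lt_of_lt_of_le hγ2N4 hS2Yγ) h
      calc (M:ℝ) * (10 * η * (N:ℝ) ^ 4)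
          ≤ γ / 200 * (1 / (M:ℝ) ^ 4) * (γ ^ 2 * (N:ℝ) ^ 4) := herr2
        _ ≤ γ / 200 * (1 / (M:ℝ) ^ 4) * ((X.card:ℝ) * Y.card * Y.card * Z.card) :=
            mul_le_mul_of_nonneg_left hS2Yγ hcoef2
    -- conclude
    have hp0 : (0:ℝ) < 1 / (M:ℝ) ^ 2 := by positivity
    have hpp : (1 / (M:ℝ) ^ 2) ^ 2 = 1 / (M:ℝ) ^ 4 := by ring
    rw [← hpp] at ha2Z ha2X ha2Y
    exact ⟨PfAux.approx_one _ _ _ γ hp0 hγ0 hγ1 ha1 hdens,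
      PfAux.approx_sq _ _ _ γ hp0 hγ0 hγ1 ha2Z hdens,
      PfAux.approx_sq _ _ _ γ hp0 hγ0 hγ1 ha2X hdens,
      PfAux.approx_sq _ _ _ γ hp0 hγ0 hγ1 ha2Y hdens⟩
end
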